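/- arXiv:2005.06285 — 4 statements merged into one kernel-verified Lean document; each statement's English description precedes it below -/
import Mathlib

section
/- For every pushdown system P = (Q, Γ, A, Δ) in push-pop normal form, setting E = |P|^{|P|⁴+1}: whenever pα →* qβ for two configurations pα, qβ of P, then Dist(pα, qβ) ≤ (|α| + |β|) · E. -/
/-- Stack contents: finite (a list in `Γ*`) or infinite (a stream, used for `αβ^ω`). -/
def SC (Γ : Type) : Type := List Γ ⊕ Stream' Γ

namespace SC

/-- Put one symbol on top of a stack content. -/
def cons {Γ : Type} (X : Γ) : SC Γ → SC Γ
  | Sum.inl l => Sum.inl (X :: l)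
  | Sum.inr s => Sum.inr (Stream'.cons X s)

/-- Put a finite word on top of a stack content. -/
def push {Γ : Type} (γ : List Γ) : SC Γ → SC Γ
  | Sum.inl l => Sum.inl (γ ++ l)
  | Sum.inr s => Sum.inr (Stream'.appendStream' γ s)

end SC

/-- `listPow β i = β^i`, the `i`-fold concatenation of `β`. -/
def listPow {Γ : Type} (β : List Γ) : ℕ → List Γ
  | 0 => []
  | n + 1 => β ++ listPow β n

/-- The infinite stack content `β^ω` (for nonempty `β`). -/
def cycSC {Γ : Type} (β : List Γ) (h : β ≠ []) : SC Γ := Sum.inr (Stream'.cycle β h)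

/-- A pushdown system, given by its (finite) transition relation
`Δ ⊆ Q × Γ × A × Q × Γ*`. -/
structure PDS (Q Γ A : Type) where
  Δ : Finset (Q × Γ × A × Q × List Γ)

namespace PDS

variable {Q Γ A : Type}

/-- The size `|P| = |Q| + |Γ| + |A| + |Δ|` of a pushdown system. -/
def size (P : PDS Q Γ A) [Fintype Q] [Fintype Γ] [Fintype A] : ℕ :=
  Fintype.card Q + Fintype.card Γ + Fintype.card A + P.Δ.card

/-- Push-pop normal form: every transition pushes a word of length at most 2. -/
def PushPop (P : PDS Q Γ A) : Prop := ∀ δ ∈ P.Δ, δ.2.2.2.2.length ≤ 2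

/-- The `a`-labeled step relation on configurations: `pXσ →_a qγσ`. -/
def Step (P : PDS Q Γ A) (a : A) (s t : Q × SC Γ) : Prop :=
  ∃ p X q γ σ, (p, X, a, q, γ) ∈ P.Δ ∧ s = (p, SC.cons X σ) ∧ t = (q, SC.push γ σ)

/-- A step with some label. -/
def StepAny (P : PDS Q Γ A) (s t : Q × SC Γ) : Prop := ∃ a, P.Step a s t

/-- Reachability `→*`. -/
def Reach (P : PDS Q Γ A) : (Q × SC Γ) → (Q × SC Γ) → Prop :=
  Relation.ReflTransGen P.StepAny

/-- `StepN P n s t` : there is a path of length exactly `n` from `s` to `t`. -/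
def StepN (P : PDS Q Γ A) : ℕ → (Q × SC Γ) → (Q × SC Γ) → Prop
  | 0, s, t => s = t
  | n + 1, s, t => ∃ u, P.StepAny s u ∧ StepN P n u t

/-- `R` is a bisimulation. -/
def IsBisim (P : PDS Q Γ A) (R : (Q × SC Γ) → (Q × SC Γ) → Prop) : Prop :=
  ∀ s t, R s t → ∀ a,
    (∀ s', P.Step a s s' → ∃ t', P.Step a t t' ∧ R s' t') ∧
    (∀ t', P.Step a t t' → ∃ s', P.Step a s s' ∧ R s' t')

/-- Bisimilarity `s ∼ t`. -/
def Bisim (P : PDS Q Γ A) (s t : Q × SC Γ) : Prop := ∃ R, P.IsBisim R ∧ R s t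

/-- `eats_α(T) = { r | ∃ q ∈ T, qα →* r }`. -/
def eats (P : PDS Q Γ A) (α : List Γ) (T : Set Q) : Set Q :=
  {r | ∃ q ∈ T, P.Reach (q, Sum.inl α) (r, Sum.inl ([] : List Γ))}

/-- `(α, β)` (with `β` nonempty) is a linked pair if `eats_α = eats_{αβ}`
and `eats_β = eats_{ββ}`. -/
def LinkedPair (P : PDS Q Γ A) (α β : List Γ) : Prop :=
  β ≠ [] ∧ P.eats α = P.eats (α ++ β) ∧ P.eats β = P.eats (β ++ β)

/-- Applying one concrete transition `δ = (p, X, a, q, γ)`. -/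
def TStep (P : PDS Q Γ A) (δ : Q × Γ × A × Q × List Γ) (s t : Q × SC Γ) : Prop :=
  δ ∈ P.Δ ∧ ∃ σ, s = (δ.1, SC.cons δ.2.1 σ) ∧ t = (δ.2.2.2.1, SC.push δ.2.2.2.2 σ)

/-- `RunTo P ρ s t` : applying the sequence of transitions `ρ` starting from `s`
yields `t`. -/
def RunTo (P : PDS Q Γ A) : List (Q × Γ × A × Q × List Γ) → (Q × SC Γ) → (Q × SC Γ) → Prop
  | [], s, t => s = t
  | δ :: ρ, s, t => ∃ u, P.TStep δ s u ∧ RunTo P ρ u t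

/-- Bisimulation classes of configurations reachable from `s₀`
(the states of the bisimulation quotient of `L(P, s₀)`). -/
def classes (P : PDS Q Γ A) (s₀ : Q × SC Γ) : Set (Set (Q × SC Γ)) :=
  {c | ∃ s, P.Reach s₀ s ∧ c = {t | P.Reach s₀ t ∧ P.Bisim s t}}

/-- The `a`-labeled step relation on bisimulation classes. -/
def classStep (P : PDS Q Γ A) (a : A) (c d : Set (Q × SC Γ)) : Prop :=
  ∃ s ∈ c, ∃ t ∈ d, P.Step a s t

end PDS

/-- `StackGrowth` of a single transition: `|γ| − 1`. -/
def tGrowth {Q Γ A : Type} (δ : Q × Γ × A × Q × List Γ) : ℤ := (δ.2.2.2.2.length : ℤ) - 1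

/-- `StackGrowth` of a run. -/
def runGrowth {Q Γ A : Type} (ρ : List (Q × Γ × A × Q × List Γ)) : ℤ := (ρ.map tGrowth).sum

/-- A run is augmenting if every prefix has nonnegative stack growth. -/
def Augmenting {Q Γ A : Type} (ρ : List (Q × Γ × A × Q × List Γ)) : Prop :=
  ∀ i ≤ ρ.length, 0 ≤ runGrowth (ρ.take i)

/-- A digging sequence `(r 0, …, r h)` for `(q, α, β)`. -/
def DiggingSeq {Q Γ A : Type} (P : PDS Q Γ A) (q : Q) (α β : List Γ)
    (h : ℕ) (r : ℕ → Q) : Prop :=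
  r 0 ∈ P.eats α {q} ∧ ∀ d, 1 ≤ d → d ≤ h → r d ∈ P.eats β {r (d - 1)}

/-- A `β^ω`-avoiding digging sequence `(r 0, …, r h)` for `(q, α, β)`,
with respect to the configuration `qαβ^eγ` (where `e ≥ 1`). -/
def Avoiding {Q Γ A : Type} (P : PDS Q Γ A) (q : Q) (α β γ : List Γ) (hβ : β ≠ [])
    (e h : ℕ) (r : ℕ → Q) : Prop :=
  DiggingSeq P q α β h r ∧
  (∃ r' ∈ P.eats β {r 0},
      ¬ P.Bisim (r', Sum.inl (listPow β (e - 1) ++ γ)) (r', cycSC β hβ)) ∧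
  ∀ d, 1 ≤ d → d ≤ h →
    ¬ P.Bisim (r d, Sum.inl (listPow β (e - d) ++ γ)) (r d, cycSC β hβ)

/-- The class of elementary functions `ℕ^k → ℕ`: the smallest class containing
constants, projections, addition, multiplication and exponentiation, and closed
under composition. -/
inductive ElementaryFun : {k : ℕ} → ((Fin k → ℕ) → ℕ) → Prop
  | const {k : ℕ} (c : ℕ) : ElementaryFun (fun _ : Fin k → ℕ => c)
  | proj {k : ℕ} (i : Fin k) : ElementaryFun (fun v : Fin k → ℕ => v i)
  | add : ElementaryFun (fun v : Fin 2 → ℕ => v 0 + v 1)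
  | mul : ElementaryFun (fun v : Fin 2 → ℕ => v 0 * v 1)
  | exp : ElementaryFun (fun v : Fin 2 → ℕ => v 0 ^ v 1)
  | comp {k m : ℕ} (f : (Fin m → ℕ) → ℕ) (g : Fin m → (Fin k → ℕ) → ℕ) :
      ElementaryFun f → (∀ i, ElementaryFun (g i)) →
      ElementaryFun (fun v : Fin k → ℕ => f (fun i => g i v))

/-- A binary function `ℕ² → ℕ` is elementary. -/
def Elementary2 (φ : ℕ → ℕ → ℕ) : Prop :=
  ElementaryFun (fun v : Fin 2 → ℕ => φ (v 0) (v 1))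

/-- A ternary function `ℕ³ → ℕ` is elementary. -/
def Elementary3 (φ : ℕ → ℕ → ℕ → ℕ) : Prop :=
  ElementaryFun (fun v : Fin 3 → ℕ => φ (v 0) (v 1) (v 2))

/-- `prodSeg w i len = w (i+1) * w (i+2) * ⋯ * w (i+len+1)` in a semigroup. -/
def prodSeg {S : Type} [Semigroup S] (w : ℕ → S) (i : ℕ) : ℕ → S
  | 0 => w (i + 1)
  | len + 1 => prodSeg w i len * w (i + len + 2)

/-- `catSeg α i len = α (i+1) ++ α (i+2) ++ ⋯ ++ α (i+len+1)`. -/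
def catSeg {Γ : Type} (α : ℕ → List Γ) (i : ℕ) : ℕ → List Γ
  | 0 => α (i + 1)
  | len + 1 => catSeg α i len ++ α (i + len + 2)

/-! ### Auxiliary development for `stmt_5` -/

section PDSProof

variable {Q Γ A : Type} [Fintype Q] [Fintype Γ] [Fintype A]

private lemma stepN_one {P : PDS Q Γ A} {s t : Q × SC Γ} (h : P.StepAny s t) :
    P.StepN 1 s t := ⟨t, h, rfl⟩

private lemma stepN_trans {P : PDS Q Γ A} :
    ∀ {m n : ℕ} {s u t : Q × SC Γ}, P.StepN m s u → P.StepN n u t → P.StepN (m + n) s t := by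
  intro m
  induction m with
  | zero =>
    intro n s u t h1 h2
    have hsu : s = u := h1
    subst hsu
    simpa using h2
  | succ m ih =>
    intro n s u t h1 h2
    obtain ⟨w, hw, h1'⟩ := h1
    have e : m + 1 + n = (m + n) + 1 := by omega
    rw [e]
    exact ⟨w, hw, ih h1' h2⟩

private lemma step_cons (P : PDS Q Γ A) {a : A} {p : Q} {X : Γ} {q : Q} {γ : List Γ}
    (h : (p, X, a, q, γ) ∈ P.Δ) (l : List Γ) :
    P.Step a (p, Sum.inl (X :: l)) (q, Sum.inl (γ ++ l)) :=
  ⟨p, X, q, γ, Sum.inl l, h, rfl, rfl⟩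

private lemma step_inl_elim {P : PDS Q Γ A} {a : A} {p : Q} {l : List Γ} {t : Q × SC Γ}
    (h : P.Step a (p, Sum.inl l) t) :
    ∃ X l' q γ, l = X :: l' ∧ (p, X, a, q, γ) ∈ P.Δ ∧ t = (q, Sum.inl (γ ++ l')) := by
  obtain ⟨p', X, q, γ, σ, hδ, hs, ht⟩ := h
  cases σ with
  | inl l0 =>
    simp only [SC.cons] at hs
    simp only [SC.push] at ht
    obtain ⟨hp, hl⟩ := Prod.mk.injEq .. ▸ hs
    have hl' : l = X :: l0 := Sum.inl.inj hl
    subst hp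
    exact ⟨X, l0, q, γ, hl', hδ, ht⟩
  | inr s =>
    simp only [SC.cons] at hs
    obtain ⟨hp, hl⟩ := Prod.mk.injEq .. ▸ hs
    exact absurd hl (by simp)

private lemma not_step_nil (P : PDS Q Γ A) {a : A} {p : Q} {t : Q × SC Γ} :
    ¬ P.Step a (p, Sum.inl ([] : List Γ)) t := by
  rintro ⟨p', X, q, γ, σ, hδ, hs, ht⟩
  cases σ with
  | inl l0 =>
    simp only [SC.cons] at hs
    obtain ⟨hp, hl⟩ := Prod.mk.injEq .. ▸ hs
    exact absurd (Sum.inl.inj hl) (by simp)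
  | inr s =>
    simp only [SC.cons] at hs
    obtain ⟨hp, hl⟩ := Prod.mk.injEq .. ▸ hs
    exact absurd hl (by simp)

private lemma stepN_nil (P : PDS Q Γ A) {n : ℕ} {p q : Q} {l : List Γ}
    (h : P.StepN n (p, Sum.inl ([] : List Γ)) (q, Sum.inl l)) :
    n = 0 ∧ p = q ∧ l = [] := by
  cases n with
  | zero =>
    have h' : ((p, Sum.inl ([] : List Γ)) : Q × SC Γ) = (q, Sum.inl l) := h
    obtain ⟨h1, h2⟩ := Prod.mk.injEq .. ▸ h'
    exact ⟨rfl, h1, (Sum.inl.inj h2).symm⟩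
  | succ n =>
    obtain ⟨u, ⟨a, hstep⟩, _⟩ := h
    exact absurd hstep (not_step_nil P)

private lemma stepN_shift (P : PDS Q Γ A) :
    ∀ {n : ℕ} {p : Q} {α : List Γ} {q : Q} {β : List Γ} (σ : List Γ),
      P.StepN n (p, Sum.inl α) (q, Sum.inl β) →
      P.StepN n (p, Sum.inl (α ++ σ)) (q, Sum.inl (β ++ σ)) := by
  intro n
  induction n with
  | zero =>
    intro p α q β σ h
    have h' : ((p, Sum.inl α) : Q × SC Γ) = (q, Sum.inl β) := h
    obtain ⟨h1, h2⟩ := Prod.mk.injEq .. ▸ h'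
    have h3 : α = β := Sum.inl.inj h2
    subst h1; subst h3
    rfl
  | succ n ih =>
    intro p α q β σ h
    obtain ⟨u, ⟨a, hstep⟩, hrest⟩ := h
    obtain ⟨X, α₁, r, γ, hls, hδ, hu⟩ := step_inl_elim hstep
    subst hu; subst hls
    have step' : P.Step a (p, Sum.inl ((X :: α₁) ++ σ)) (r, Sum.inl ((γ ++ α₁) ++ σ)) := by
      simpa [List.append_assoc] using step_cons P hδ (α₁ ++ σ)
    exact ⟨(r, Sum.inl ((γ ++ α₁) ++ σ)), ⟨a, step'⟩, ih σ hrest⟩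

private lemma stepN_split (P : PDS Q Γ A) :
    ∀ (n : ℕ) (p : Q) (τ σ : List Γ) (q : Q) (ρ : List Γ),
      P.StepN n (p, Sum.inl (τ ++ σ)) (q, Sum.inl ρ) →
      (∃ τ', ρ = τ' ++ σ ∧ P.StepN n (p, Sum.inl τ) (q, Sum.inl τ')) ∨
      (∃ r n₁ n₂, n₁ + n₂ = n ∧ P.StepN n₁ (p, Sum.inl τ) (r, Sum.inl ([] : List Γ)) ∧
        P.StepN n₂ (r, Sum.inl σ) (q, Sum.inl ρ)) := by
  intro n
  induction n with
  | zero =>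
    intro p τ σ q ρ h
    have h' : ((p, Sum.inl (τ ++ σ)) : Q × SC Γ) = (q, Sum.inl ρ) := h
    obtain ⟨h1, h2⟩ := Prod.mk.injEq .. ▸ h'
    have h3 : τ ++ σ = ρ := Sum.inl.inj h2
    subst h1
    exact Or.inl ⟨τ, h3.symm, rfl⟩
  | succ n ih =>
    intro p τ σ q ρ h
    cases τ with
    | nil =>
      refine Or.inr ⟨p, 0, n + 1, by omega, rfl, ?_⟩
      simpa using h
    | cons X τ₁ =>
      obtain ⟨u, ⟨a, hstep⟩, hrest⟩ := h
      obtain ⟨X', l', r, γ, hls, hδ, hu⟩ := step_inl_elim hstep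
      subst hu
      have hX : X' = X := by
        have := hls.symm
        simp only [List.cons_append] at this
        exact (List.cons.injEq .. ▸ this).1
      have hl' : l' = τ₁ ++ σ := by
        have := hls.symm
        simp only [List.cons_append] at this
        exact (List.cons.injEq .. ▸ this).2
      subst hX; subst hl'
      have hrest' : P.StepN n (r, Sum.inl ((γ ++ τ₁) ++ σ)) (q, Sum.inl ρ) := by
        simp [List.append_assoc] at hrest ⊢; exact hrest
      rcases ih r (γ ++ τ₁) σ q ρ hrest' with ⟨τ', hρ, h1⟩ | ⟨r', n₁, n₂, hn, h1, h2⟩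
      · exact Or.inl ⟨τ', hρ, ⟨(r, Sum.inl (γ ++ τ₁)), ⟨a, step_cons P hδ τ₁⟩, h1⟩⟩
      · exact Or.inr ⟨r', n₁ + 1, n₂, by omega,
          ⟨(r, Sum.inl (γ ++ τ₁)), ⟨a, step_cons P hδ τ₁⟩, h1⟩, h2⟩

/-- Generic stabilization of a monotone iteration of finsets. -/
private lemma satStab {τ : Type} [Fintype τ] (W : ℕ → Finset τ) (F : Finset τ → Finset τ)
    (hrec : ∀ i, W (i + 1) = F (W i)) (hmono : ∀ i, W i ⊆ W (i + 1)) (n : ℕ) :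
    W n ⊆ W (Fintype.card τ) := by
  classical
  have mono : ∀ {i j : ℕ}, i ≤ j → W i ⊆ W j := by
    intro i j h
    induction h with
    | refl => exact Finset.Subset.refl _
    | @step j hj ih => exact ih.trans (hmono j)
  have stable : ∀ i, W i = W (i + 1) → ∀ j, i ≤ j → W j = W i := by
    intro i hi j hj
    induction j, hj using Nat.le_induction with
    | base => rfl
    | succ j hj ih => rw [hrec j, ih, ← hrec i, ← hi]
  have hex : ∃ i, i ≤ Fintype.card τ ∧ W i = W (i + 1) := by
    by_contra hc
    push_neg at hc
    have key : ∀ i, i ≤ Fintype.card τ + 1 → i ≤ (W i).card := by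
      intro i hi
      induction i with
      | zero => exact Nat.zero_le _
      | succ i ihh =>
        have hss : W i ⊂ W (i + 1) :=
          lt_of_le_of_ne (Finset.le_iff_subset.mpr (hmono i)) (hc i (by omega))
        have hcard := Finset.card_lt_card hss
        have := ihh (by omega)
        omega
    have h1 := key (Fintype.card τ + 1) le_rfl
    have h2 : (W (Fintype.card τ + 1)).card ≤ Fintype.card τ :=
      (Finset.card_le_univ _).trans (le_of_eq Finset.card_univ)
    omega
  obtain ⟨i, hiN, hi⟩ := hex
  rcases le_total n (Fintype.card τ) with h | h
  · exact mono h
  · have e1 := stable i hi n (le_trans hiN h)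
    have e2 := stable i hi (Fintype.card τ) hiN
    rw [e1, ← e2]

open scoped Classical in
/-- One saturation step for the pop relation. -/
private noncomputable def popF (P : PDS Q Γ A) (S : Finset (Q × Γ × Q)) : Finset (Q × Γ × Q) :=
  S ∪ Finset.univ.filter (fun t : Q × Γ × Q => ∃ a : A,
    (t.1, t.2.1, a, t.2.2, ([] : List Γ)) ∈ P.Δ ∨
    (∃ q Z, (t.1, t.2.1, a, q, [Z]) ∈ P.Δ ∧ (q, Z, t.2.2) ∈ S) ∨
    (∃ q c d s, (t.1, t.2.1, a, q, [c, d]) ∈ P.Δ ∧ (q, c, s) ∈ S ∧ (s, d, t.2.2) ∈ S))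

private noncomputable def popW (P : PDS Q Γ A) : ℕ → Finset (Q × Γ × Q)
  | 0 => ∅
  | i + 1 => popF P (popW P i)

private lemma mem_popF {P : PDS Q Γ A} {S : Finset (Q × Γ × Q)} {t : Q × Γ × Q} :
    t ∈ popF P S ↔ t ∈ S ∨ ∃ a : A,
      (t.1, t.2.1, a, t.2.2, ([] : List Γ)) ∈ P.Δ ∨
      (∃ q Z, (t.1, t.2.1, a, q, [Z]) ∈ P.Δ ∧ (q, Z, t.2.2) ∈ S) ∨
      (∃ q c d s, (t.1, t.2.1, a, q, [c, d]) ∈ P.Δ ∧ (q, c, s) ∈ S ∧ (s, d, t.2.2) ∈ S) := by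
  classical
  simp [popF, Finset.mem_union, Finset.mem_filter]

private lemma popW_mono (P : PDS Q Γ A) (i : ℕ) : popW P i ⊆ popW P (i + 1) := by
  rw [show popW P (i + 1) = popF P (popW P i) from rfl]
  intro t ht
  exact mem_popF.mpr (Or.inl ht)

private lemma popW_le_of_le (P : PDS Q Γ A) {i j : ℕ} (h : i ≤ j) : popW P i ⊆ popW P j := by
  induction h with
  | refl => exact Finset.Subset.refl _
  | @step j hj ih => exact ih.trans (popW_mono P j)

private lemma popW_le (P : PDS Q Γ A) (n : ℕ) :
    popW P n ⊆ popW P (Fintype.card (Q × Γ × Q)) :=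
  satStab (popW P) (popF P) (fun _ => rfl) (popW_mono P) n

private lemma popW_sound (P : PDS Q Γ A) :
    ∀ (i : ℕ) (p : Q) (X : Γ) (r : Q), (p, X, r) ∈ popW P i →
      ∃ m, m ≤ 2 ^ i - 1 ∧ P.StepN m (p, Sum.inl [X]) (r, Sum.inl ([] : List Γ)) := by
  intro i
  induction i with
  | zero => intro p X r h; simp [popW] at h
  | succ i ih =>
    intro p X r h
    have h2i : 1 ≤ 2 ^ i := Nat.one_le_two_pow
    have h2i1 : 2 ^ (i + 1) = 2 ^ i + 2 ^ i := by rw [pow_succ]; omega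
    rw [show popW P (i + 1) = popF P (popW P i) from rfl] at h
    rcases mem_popF.mp h with hS | ⟨a, hr1 | ⟨q, Z, hδ, hS⟩ | ⟨q, c, d, s, hδ, hS1, hS2⟩⟩
    · obtain ⟨m, hm, hrun⟩ := ih p X r hS
      exact ⟨m, by omega, hrun⟩
    · refine ⟨1, by omega, stepN_one ⟨a, ?_⟩⟩
      simpa using step_cons P hr1 ([] : List Γ)
    · obtain ⟨m, hm, hrun⟩ := ih q Z r hS
      refine ⟨m + 1, by omega, ?_⟩
      exact ⟨(q, Sum.inl [Z]), ⟨a, by simpa using step_cons P hδ ([] : List Γ)⟩, hrun⟩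
    · obtain ⟨m1, hm1, hrun1⟩ := ih q c s hS1
      obtain ⟨m2, hm2, hrun2⟩ := ih s d r hS2
      have hrun1' := stepN_shift P [d] hrun1
      have comb : P.StepN (m1 + m2) (q, Sum.inl [c, d]) (r, Sum.inl ([] : List Γ)) := by
        refine stepN_trans ?_ hrun2
        simpa using hrun1'
      refine ⟨(m1 + m2) + 1, by omega, ?_⟩
      exact ⟨(q, Sum.inl [c, d]), ⟨a, by simpa using step_cons P hδ ([] : List Γ)⟩, comb⟩

private lemma pop_complete (P : PDS Q Γ A) (hpp : P.PushPop) :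
    ∀ (n : ℕ) (p : Q) (X : Γ) (r : Q),
      P.StepN n (p, Sum.inl [X]) (r, Sum.inl ([] : List Γ)) → (p, X, r) ∈ popW P n := by
  intro n
  induction n using Nat.strong_induction_on with
  | _ n ih =>
    intro p X r h
    cases n with
    | zero =>
      exfalso
      have h' : ((p, Sum.inl [X]) : Q × SC Γ) = (r, Sum.inl ([] : List Γ)) := h
      obtain ⟨h1, h2⟩ := Prod.mk.injEq .. ▸ h'
      exact absurd (Sum.inl.inj h2) (by simp)
    | succ n =>
      obtain ⟨u, ⟨a, hstep⟩, hrest⟩ := h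
      obtain ⟨X', l', q₁, γ, hls, hδ, hu⟩ := step_inl_elim hstep
      have hX : X' = X := ((List.cons.injEq .. ▸ hls.symm)).1
      have hl' : l' = [] := ((List.cons.injEq .. ▸ hls.symm)).2
      subst hX; subst hl'; subst hu
      have hγ : γ.length ≤ 2 := hpp _ hδ
      have hrest' : P.StepN n (q₁, Sum.inl γ) (r, Sum.inl ([] : List Γ)) := by
        simp at hrest ⊢; exact hrest
      rw [show popW P (n + 1) = popF P (popW P n) from rfl]
      rcases γ with _ | ⟨Z, γ₂⟩
      · obtain ⟨hn0, hq, -⟩ := stepN_nil P hrest'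
        subst hq
        exact mem_popF.mpr (Or.inr ⟨a, Or.inl hδ⟩)
      rcases γ₂ with _ | ⟨d, γ₃⟩
      · have hm := ih n (Nat.lt_succ_self n) q₁ Z r hrest'
        exact mem_popF.mpr (Or.inr ⟨a, Or.inr (Or.inl ⟨q₁, Z, hδ, hm⟩)⟩)
      rcases γ₃ with _ | ⟨e, γ₄⟩
      · have hsplit := stepN_split P n q₁ [Z] [d] r [] (by simpa using hrest')
        rcases hsplit with ⟨τ', hτ, -⟩ | ⟨s, n₁, n₂, hn, h1, h2⟩
        · exact absurd hτ.symm (by simp)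
        · have m1 := ih n₁ (by omega) q₁ Z s h1
          have m2 := ih n₂ (by omega) s d r h2
          exact mem_popF.mpr (Or.inr ⟨a, Or.inr (Or.inr ⟨q₁, Z, d, s, hδ,
            popW_le_of_le P (by omega) m1, popW_le_of_le P (by omega) m2⟩)⟩)
      · exfalso; simp at hγ

private lemma pop_bd (P : PDS Q Γ A) (hpp : P.PushPop) {n : ℕ} {p : Q} {X : Γ} {r : Q}
    (h : P.StepN n (p, Sum.inl [X]) (r, Sum.inl ([] : List Γ))) :
    (p, X, r) ∈ popW P (Fintype.card (Q × Γ × Q)) ∧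
      ∃ m, m ≤ 2 ^ Fintype.card (Q × Γ × Q) - 1 ∧
        P.StepN m (p, Sum.inl [X]) (r, Sum.inl ([] : List Γ)) := by
  have hmem := popW_le P n (pop_complete P hpp n p X r h)
  exact ⟨hmem, popW_sound P _ p X r hmem⟩

/-- Macro edges between head configurations. -/
private def hEdge (P : PDS Q Γ A) (x y : Q × Γ) : Prop :=
  (∃ a, (x.1, x.2, a, y.1, [y.2]) ∈ P.Δ) ∨
  (∃ a q c, (x.1, x.2, a, q, [c, y.2]) ∈ P.Δ ∧
    (q, c, y.1) ∈ popW P (Fintype.card (Q × Γ × Q)))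

private lemma hEdge_sound {P : PDS Q Γ A} {x y : Q × Γ} (h : hEdge P x y) :
    ∃ m, m ≤ 2 ^ Fintype.card (Q × Γ × Q) ∧
      P.StepN m (x.1, Sum.inl [x.2]) (y.1, Sum.inl [y.2]) := by
  have h2 : 1 ≤ 2 ^ Fintype.card (Q × Γ × Q) := Nat.one_le_two_pow
  rcases h with ⟨a, hδ⟩ | ⟨a, q, c, hδ, hpop⟩
  · refine ⟨1, h2, stepN_one ⟨a, ?_⟩⟩
    simpa using step_cons P hδ ([] : List Γ)
  · obtain ⟨m, hm, hrun⟩ := popW_sound P _ q c y.1 hpop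
    have hrun' := stepN_shift P [y.2] hrun
    have s1 : P.StepN 1 (x.1, Sum.inl [x.2]) (q, Sum.inl [c, y.2]) :=
      stepN_one ⟨a, by simpa using step_cons P hδ ([] : List Γ)⟩
    refine ⟨1 + m, by omega, stepN_trans s1 ?_⟩
    simpa using hrun'

open scoped Classical in
private noncomputable def headF (P : PDS Q Γ A) (S : Finset ((Q × Γ) × (Q × Γ))) :
    Finset ((Q × Γ) × (Q × Γ)) :=
  S ∪ Finset.univ.filter (fun t : (Q × Γ) × (Q × Γ) => ∃ y, hEdge P t.1 y ∧ (y, t.2) ∈ S)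

open scoped Classical in
private noncomputable def headW (P : PDS Q Γ A) : ℕ → Finset ((Q × Γ) × (Q × Γ))
  | 0 => Finset.univ.filter (fun t : (Q × Γ) × (Q × Γ) => t.1 = t.2)
  | i + 1 => headF P (headW P i)

private lemma mem_headF {P : PDS Q Γ A} {S : Finset ((Q × Γ) × (Q × Γ))}
    {t : (Q × Γ) × (Q × Γ)} :
    t ∈ headF P S ↔ t ∈ S ∨ ∃ y, hEdge P t.1 y ∧ (y, t.2) ∈ S := by
  classical
  simp [headF, Finset.mem_union, Finset.mem_filter]

private lemma headW_mono (P : PDS Q Γ A) (i : ℕ) : headW P i ⊆ headW P (i + 1) := by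
  rw [show headW P (i + 1) = headF P (headW P i) from rfl]
  intro t ht
  exact mem_headF.mpr (Or.inl ht)

private lemma headW_le_of_le (P : PDS Q Γ A) {i j : ℕ} (h : i ≤ j) :
    headW P i ⊆ headW P j := by
  induction h with
  | refl => exact Finset.Subset.refl _
  | @step j hj ih => exact ih.trans (headW_mono P j)

private lemma headW_le (P : PDS Q Γ A) (n : ℕ) :
    headW P n ⊆ headW P (Fintype.card ((Q × Γ) × (Q × Γ))) :=
  satStab (headW P) (headF P) (fun _ => rfl) (headW_mono P) n

private lemma headW_diag (P : PDS Q Γ A) (n : ℕ) (x : Q × Γ) : (x, x) ∈ headW P n := by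
  classical
  have h0 : (x, x) ∈ headW P 0 := by simp [headW]
  exact headW_le_of_le P (Nat.zero_le n) h0

private lemma headW_sound (P : PDS Q Γ A) :
    ∀ (i : ℕ) (x z : Q × Γ), (x, z) ∈ headW P i →
      ∃ m, m ≤ i * 2 ^ Fintype.card (Q × Γ × Q) ∧
        P.StepN m (x.1, Sum.inl [x.2]) (z.1, Sum.inl [z.2]) := by
  intro i
  induction i with
  | zero =>
    intro x z h
    classical
    have hxz : x = z := by simpa [headW] using h
    subst hxz
    exact ⟨0, Nat.zero_le _, rfl⟩
  | succ i ih =>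
    intro x z h
    have e : (i + 1) * 2 ^ Fintype.card (Q × Γ × Q) =
        2 ^ Fintype.card (Q × Γ × Q) + i * 2 ^ Fintype.card (Q × Γ × Q) := by ring
    rw [show headW P (i + 1) = headF P (headW P i) from rfl] at h
    rcases mem_headF.mp h with hS | ⟨y, hedge, hS⟩
    · obtain ⟨m, hm, hrun⟩ := ih x z hS
      exact ⟨m, le_trans hm (Nat.mul_le_mul_right _ (Nat.le_succ i)), hrun⟩
    · obtain ⟨m1, hm1, hrun1⟩ := hEdge_sound hedge
      obtain ⟨m2, hm2, hrun2⟩ := ih y z hS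
      refine ⟨m1 + m2, ?_, stepN_trans hrun1 hrun2⟩
      exact e.symm ▸ Nat.add_le_add hm1 hm2

private lemma head_complete (P : PDS Q Γ A) (hpp : P.PushPop) :
    ∀ (n : ℕ) (p : Q) (X : Γ) (q : Q) (Y : Γ),
      P.StepN n (p, Sum.inl [X]) (q, Sum.inl [Y]) → ((p, X), (q, Y)) ∈ headW P n := by
  intro n
  induction n using Nat.strong_induction_on with
  | _ n ih =>
    intro p X q Y h
    cases n with
    | zero =>
      classical
      have h' : ((p, Sum.inl [X]) : Q × SC Γ) = (q, Sum.inl [Y]) := h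
      obtain ⟨h1, h2⟩ := Prod.mk.injEq .. ▸ h'
      have h3 : X = Y := by simpa using Sum.inl.inj h2
      subst h1; subst h3
      simp [headW]
    | succ n =>
      obtain ⟨u, ⟨a, hstep⟩, hrest⟩ := h
      obtain ⟨X', l', q₁, γ, hls, hδ, hu⟩ := step_inl_elim hstep
      have hX : X' = X := ((List.cons.injEq .. ▸ hls.symm)).1
      have hl' : l' = [] := ((List.cons.injEq .. ▸ hls.symm)).2
      subst hX; subst hl'; subst hu
      have hγ : γ.length ≤ 2 := hpp _ hδ
      have hrest' : P.StepN n (q₁, Sum.inl γ) (q, Sum.inl [Y]) := by simp at hrest ⊢; exact hrest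
      rw [show headW P (n + 1) = headF P (headW P n) from rfl]
      rcases γ with _ | ⟨Z, γ₂⟩
      · exfalso
        obtain ⟨-, -, hl⟩ := stepN_nil P hrest'
        exact absurd hl (by simp)
      rcases γ₂ with _ | ⟨d, γ₃⟩
      · have hm := ih n (Nat.lt_succ_self n) q₁ Z q Y hrest'
        exact mem_headF.mpr (Or.inr ⟨(q₁, Z), Or.inl ⟨a, hδ⟩, hm⟩)
      rcases γ₃ with _ | ⟨e, γ₄⟩
      · have hsplit := stepN_split P n q₁ [Z] [d] q [Y] (by simpa using hrest')
        rcases hsplit with ⟨τ', hτ, h1⟩ | ⟨s, n₁, n₂, hn, h1, h2⟩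
        · have hdY : τ' = [] ∧ d = Y := by
            rcases τ' with _ | ⟨u1, u2⟩
            · constructor
              · rfl
              · simpa using hτ.symm
            · exfalso
              have : [Y] = u1 :: (u2 ++ [d]) := by simpa using hτ
              have h2 := (List.cons.injEq .. ▸ this).2
              exact absurd h2.symm (by simp)
          obtain ⟨hτ', hdY'⟩ := hdY
          subst hτ'
          rw [hdY'] at hδ
          have hpop : (q₁, Z, q) ∈ popW P (Fintype.card (Q × Γ × Q)) :=
            popW_le P n (pop_complete P hpp n q₁ Z q h1)
          exact mem_headF.mpr (Or.inr ⟨(q, Y), Or.inr ⟨a, q₁, Z, hδ, hpop⟩,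
            headW_diag P n (q, Y)⟩)
        · have hpop : (q₁, Z, s) ∈ popW P (Fintype.card (Q × Γ × Q)) :=
            popW_le P n₁ (pop_complete P hpp n₁ q₁ Z s h1)
          have hm := ih n₂ (by omega) s d q Y h2
          exact mem_headF.mpr (Or.inr ⟨(s, d), Or.inr ⟨a, q₁, Z, hδ, hpop⟩,
            headW_le_of_le P (by omega) hm⟩)
      · exfalso; simp at hγ

private lemma head_bd (P : PDS Q Γ A) (hpp : P.PushPop) {n : ℕ} {p : Q} {X : Γ} {q : Q} {Y : Γ}
    (h : P.StepN n (p, Sum.inl [X]) (q, Sum.inl [Y])) :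
    ∃ m, m ≤ Fintype.card ((Q × Γ) × (Q × Γ)) * 2 ^ Fintype.card (Q × Γ × Q) ∧
      P.StepN m (p, Sum.inl [X]) (q, Sum.inl [Y]) := by
  have hmem := headW_le P n (head_complete P hpp n p X q Y h)
  exact headW_sound P _ (p, X) (q, Y) hmem

/-- The compression constant. -/
private noncomputable def KC (P : PDS Q Γ A) : ℕ :=
  Fintype.card ((Q × Γ) × (Q × Γ)) * 2 ^ Fintype.card (Q × Γ × Q) + 1

/-- Digging out the last low point of a run that ends higher than it starts. -/
private lemma dig (P : PDS Q Γ A) (hpp : P.PushPop) (q : Q) (ρ : List Γ) (k : ℕ) :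
    ∀ (n : ℕ) (p : Q) (α : List Γ), P.StepN n (p, Sum.inl α) (q, Sum.inl ρ) →
      α.length ≤ k → k < ρ.length →
      ∃ (n₁ n₂ : ℕ) (s : Q) (σ : List Γ) (q₁ : Q) (c : Γ) (σ' τ' : List Γ),
        n₁ + 1 + n₂ = n ∧ σ.length = k ∧ σ'.length = k ∧ ρ = τ' ++ σ' ∧
        P.StepN n₁ (p, Sum.inl α) (s, Sum.inl σ) ∧
        P.StepAny (s, Sum.inl σ) (q₁, Sum.inl (c :: σ')) ∧
        P.StepN n₂ (q₁, Sum.inl [c]) (q, Sum.inl τ') := by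
  intro n
  induction n using Nat.strong_induction_on with
  | _ n ih =>
    intro p α h hα hk
    cases n with
    | zero =>
      exfalso
      have h' : ((p, Sum.inl α) : Q × SC Γ) = (q, Sum.inl ρ) := h
      obtain ⟨h1, h2⟩ := Prod.mk.injEq .. ▸ h'
      have h3 : α = ρ := Sum.inl.inj h2
      subst h3
      omega
    | succ n =>
      obtain ⟨u, ⟨a, hstep⟩, hrest⟩ := h
      obtain ⟨X, α₁, q₁, γ, hls, hδ, hu⟩ := step_inl_elim hstep
      subst hu; subst hls
      have hγ : γ.length ≤ 2 := hpp _ hδ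
      rcases le_or_gt (γ ++ α₁).length k with hlen | hlen
      · obtain ⟨n₁, n₂, s, σ, q₂, c, σ', τ', hn, hσ, hσ', hρ, h1, h2, h3⟩ :=
          ih n (Nat.lt_succ_self n) q₁ (γ ++ α₁) hrest hlen hk
        exact ⟨n₁ + 1, n₂, s, σ, q₂, c, σ', τ', by omega, hσ, hσ', hρ,
          ⟨(q₁, Sum.inl (γ ++ α₁)), ⟨a, step_cons P hδ α₁⟩, h1⟩, h2, h3⟩
      · have hαl : (X :: α₁).length = α₁.length + 1 := by simp
        have hγl : (γ ++ α₁).length = γ.length + α₁.length := by simp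
        have hγ2 : γ.length = 2 := by omega
        have hαk : α₁.length + 1 = k := by omega
        obtain ⟨c, d, hγeq⟩ : ∃ c d, γ = [c, d] := by
          rcases γ with _ | ⟨c, _ | ⟨d, _ | ⟨e, γ₄⟩⟩⟩ <;> simp_all
        subst hγeq
        have hrest' : P.StepN n (q₁, Sum.inl ([c] ++ (d :: α₁))) (q, Sum.inl ρ) := by
          simp at hrest ⊢; exact hrest
        rcases stepN_split P n q₁ [c] (d :: α₁) q ρ hrest' with
          ⟨τ', hρ, h1⟩ | ⟨r, m₁, m₂, hm, h1, h2⟩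
        · refine ⟨0, n, p, X :: α₁, q₁, c, d :: α₁, τ', by omega, by simpa using hαk,
            by simpa using hαk, hρ, rfl, ⟨a, ?_⟩, h1⟩
          exact step_cons P hδ α₁
        · have h1' : P.StepN m₁ (q₁, Sum.inl (c :: d :: α₁)) (r, Sum.inl (d :: α₁)) := by
            simpa using stepN_shift P (d :: α₁) h1
          obtain ⟨n₁, n₂, s, σ, q₂, c', σ', τ', hn, hσ, hσ', hρ, g1, g2, g3⟩ :=
            ih m₂ (by omega) r (d :: α₁) h2 (by simpa using le_of_eq hαk) hk
          have s1 : P.StepN 1 (p, Sum.inl (X :: α₁)) (q₁, Sum.inl (c :: d :: α₁)) :=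
            stepN_one ⟨a, step_cons P hδ α₁⟩
          refine ⟨1 + m₁ + n₁, n₂, s, σ, q₂, c', σ', τ', by omega, hσ, hσ', hρ,
            stepN_trans (stepN_trans s1 h1') g1, g2, g3⟩

/-- Compression of runs starting from a single stack symbol. -/
private lemma core (P : PDS Q Γ A) (hpp : P.PushPop)
    (hM : 1 ≤ Fintype.card ((Q × Γ) × (Q × Γ))) :
    ∀ (n : ℕ) (p : Q) (X : Γ) (q : Q) (β₁ : List Γ),
      P.StepN n (p, Sum.inl [X]) (q, Sum.inl β₁) →
      ∃ m, m ≤ (1 + β₁.length) * KC P ∧ P.StepN m (p, Sum.inl [X]) (q, Sum.inl β₁) := by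
  intro n
  induction n using Nat.strong_induction_on with
  | _ n ih =>
    intro p X q β₁ h
    have hK : KC P =
        Fintype.card ((Q × Γ) × (Q × Γ)) * 2 ^ Fintype.card (Q × Γ × Q) + 1 := rfl
    have hMN : 2 ^ Fintype.card (Q × Γ × Q) ≤
        Fintype.card ((Q × Γ) × (Q × Γ)) * 2 ^ Fintype.card (Q × Γ × Q) := by
      calc 2 ^ Fintype.card (Q × Γ × Q)
          = 1 * 2 ^ Fintype.card (Q × Γ × Q) := (one_mul _).symm
      _ ≤ Fintype.card ((Q × Γ) × (Q × Γ)) * 2 ^ Fintype.card (Q × Γ × Q) :=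
        Nat.mul_le_mul_right _ hM
    have hNK : 2 ^ Fintype.card (Q × Γ × Q) ≤ KC P := by
      rw [hK]; exact le_trans hMN (Nat.le_succ _)
    have hMK : Fintype.card ((Q × Γ) × (Q × Γ)) * 2 ^ Fintype.card (Q × Γ × Q) ≤ KC P := by
      rw [hK]; exact Nat.le_succ _
    rcases β₁ with _ | ⟨Y, β₂⟩
    · obtain ⟨-, m, hm, hrun⟩ := pop_bd P hpp h
      refine ⟨m, ?_, hrun⟩
      simpa using le_trans hm (le_trans (Nat.sub_le _ _) hNK)
    rcases β₂ with _ | ⟨W, β₃⟩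
    · obtain ⟨m, hm, hrun⟩ := head_bd P hpp h
      refine ⟨m, ?_, hrun⟩
      have hL : 1 + ([Y] : List Γ).length = 2 := by simp
      rw [hL]
      exact le_trans (le_trans hm hMK) (Nat.le_mul_of_pos_left (KC P) (by norm_num))
    · obtain ⟨n₁, n₂, s, σ, q₁, c, σ', τ', hn, hσ, hσ', hρ, h1, h2, h3⟩ :=
        dig P hpp q (Y :: W :: β₃) (W :: β₃).length n p [X] h (by simp) (by simp)
      have hinj : τ' = [Y] ∧ σ' = W :: β₃ := by
        have happ : τ' ++ σ' = [Y] ++ (W :: β₃) := by simpa using hρ.symm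
        exact List.append_inj' happ (by simpa using hσ')
      obtain ⟨hτ', hσ'eq⟩ := hinj
      subst hτ'; subst hσ'eq
      obtain ⟨m₁, hm₁, hr₁⟩ := ih n₁ (by omega) p X s σ h1
      obtain ⟨m₃, hm₃, hr₃⟩ := head_bd P hpp h3
      have hr₃' : P.StepN m₃ (q₁, Sum.inl (c :: W :: β₃)) (q, Sum.inl (Y :: W :: β₃)) := by
        simpa using stepN_shift P (W :: β₃) hr₃
      refine ⟨m₁ + 1 + m₃, ?_, stepN_trans (stepN_trans hr₁ (stepN_one h2)) hr₃'⟩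
      have e : (1 + (Y :: W :: β₃).length) * KC P = (1 + σ.length) * KC P + KC P := by
        have e1 : (Y :: W :: β₃).length = σ.length + 1 := by
          simp only [List.length_cons] at hσ ⊢
          omega
        rw [e1]; ring
      have hstep1 : m₃ + 1 ≤ KC P := by rw [hK]; exact Nat.add_le_add_right hm₃ 1
      calc m₁ + 1 + m₃ = m₁ + (m₃ + 1) := by omega
      _ ≤ (1 + σ.length) * KC P + KC P := Nat.add_le_add hm₁ hstep1
      _ = (1 + (Y :: W :: β₃).length) * KC P := e.symm

/-- Main compression lemma. -/
private lemma mainlem (P : PDS Q Γ A) (hpp : P.PushPop)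
    (hM : 1 ≤ Fintype.card ((Q × Γ) × (Q × Γ))) :
    ∀ (n : ℕ) (p : Q) (α : List Γ) (q : Q) (β : List Γ),
      P.StepN n (p, Sum.inl α) (q, Sum.inl β) →
      ∃ m, m ≤ (α.length + β.length) * KC P ∧ P.StepN m (p, Sum.inl α) (q, Sum.inl β) := by
  intro n
  induction n using Nat.strong_induction_on with
  | _ n ih =>
    intro p α q β h
    have hK : KC P =
        Fintype.card ((Q × Γ) × (Q × Γ)) * 2 ^ Fintype.card (Q × Γ × Q) + 1 := rfl
    have hMN : 2 ^ Fintype.card (Q × Γ × Q) ≤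
        Fintype.card ((Q × Γ) × (Q × Γ)) * 2 ^ Fintype.card (Q × Γ × Q) := by
      calc 2 ^ Fintype.card (Q × Γ × Q)
          = 1 * 2 ^ Fintype.card (Q × Γ × Q) := (one_mul _).symm
      _ ≤ Fintype.card ((Q × Γ) × (Q × Γ)) * 2 ^ Fintype.card (Q × Γ × Q) :=
        Nat.mul_le_mul_right _ hM
    have hNK : 2 ^ Fintype.card (Q × Γ × Q) ≤ KC P := by
      rw [hK]; exact le_trans hMN (Nat.le_succ _)
    have hMK : Fintype.card ((Q × Γ) × (Q × Γ)) * 2 ^ Fintype.card (Q × Γ × Q) ≤ KC P := by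
      rw [hK]; exact Nat.le_succ _
    rcases α with _ | ⟨X, α'⟩
    · obtain ⟨hn0, hpq, hβ⟩ := stepN_nil P h
      subst hpq; subst hβ
      exact ⟨0, Nat.zero_le _, rfl⟩
    · have h' : P.StepN n (p, Sum.inl ([X] ++ α')) (q, Sum.inl β) := by simpa using h
      rcases stepN_split P n p [X] α' q β h' with ⟨β₁, hβ, h1⟩ | ⟨r, n₁, n₂, hn, h1, h2⟩
      · obtain ⟨m, hm, hrun⟩ := core P hpp hM n p X q β₁ h1
        have hrun' : P.StepN m (p, Sum.inl (X :: α')) (q, Sum.inl β) := by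
          have := stepN_shift P α' hrun
          rw [hβ]
          simpa using this
        refine ⟨m, ?_, hrun'⟩
        refine le_trans hm ?_
        apply Nat.mul_le_mul_right
        subst hβ
        simp only [List.length_cons, List.length_append]
        omega
      · have hn₁ : n₁ ≠ 0 := by
          intro h0
          subst h0
          have h1' : ((p, Sum.inl [X]) : Q × SC Γ) = (r, Sum.inl ([] : List Γ)) := h1
          obtain ⟨-, h2'⟩ := Prod.mk.injEq .. ▸ h1'
          exact absurd (Sum.inl.inj h2') (by simp)
        obtain ⟨-, m₁, hm₁, hr₁⟩ := pop_bd P hpp h1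
        have hr₁' : P.StepN m₁ (p, Sum.inl (X :: α')) (r, Sum.inl α') := by
          simpa using stepN_shift P α' hr₁
        obtain ⟨m₂, hm₂, hr₂⟩ := ih n₂ (by omega) r α' q β h2
        refine ⟨m₁ + m₂, ?_, stepN_trans hr₁' hr₂⟩
        have e : ((X :: α').length + β.length) * KC P =
            KC P + (α'.length + β.length) * KC P := by
          simp only [List.length_cons]
          ring
        have hm₁' : m₁ ≤ KC P := le_trans hm₁ (le_trans (Nat.sub_le _ _) hNK)
        calc m₁ + m₂ ≤ KC P + (α'.length + β.length) * KC P := Nat.add_le_add hm₁' hm₂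
        _ = ((X :: α').length + β.length) * KC P := e.symm

private lemma reach_stepN {P : PDS Q Γ A} {s t : Q × SC Γ} (h : P.Reach s t) :
    ∃ n, P.StepN n s t := by
  have h' : Relation.ReflTransGen P.StepAny s t := h
  clear h
  induction h' with
  | refl => exact ⟨0, rfl⟩
  | tail hsteps hstep ih =>
    obtain ⟨n, hn⟩ := ih
    exact ⟨n + 1, stepN_trans hn (stepN_one hstep)⟩

private lemma reach_eq_of_empty {P : PDS Q Γ A} (hΔ : P.Δ = ∅) {s t : Q × SC Γ}
    (h : P.Reach s t) : s = t := by
  have h' : Relation.ReflTransGen P.StepAny s t := h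
  clear h
  induction h' with
  | refl => rfl
  | tail hsteps hstep ih =>
    exfalso
    obtain ⟨a, p, X, q, γ, σ, hδ, -, -⟩ := hstep
    rw [hΔ] at hδ
    exact absurd hδ (Finset.notMem_empty _)

private lemma KC_le_E (P : PDS Q Γ A) (hQ : 1 ≤ Fintype.card Q) (hΓ : 1 ≤ Fintype.card Γ)
    (hA : 1 ≤ Fintype.card A) (hΔ : 1 ≤ P.Δ.card) :
    KC P ≤ P.size ^ (P.size ^ 4 + 1) := by
  have hs : P.size = Fintype.card Q + Fintype.card Γ + Fintype.card A + P.Δ.card := rfl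
  set s := P.size with hsdef
  set cQ := Fintype.card Q with hcQ
  set cΓ := Fintype.card Γ with hcΓ
  have hs4 : 4 ≤ s := by omega
  have hQs : cQ ≤ s := by omega
  have hΓs : cΓ ≤ s := by omega
  have hM : Fintype.card ((Q × Γ) × (Q × Γ)) = (cQ * cΓ) * (cQ * cΓ) := by
    simp [Fintype.card_prod]; rfl
  have hN : Fintype.card (Q × Γ × Q) = cQ * (cΓ * cQ) := by
    simp [Fintype.card_prod]; rfl
  rw [KC, hM, hN]
  have h1 : cQ * cΓ ≤ s * s := Nat.mul_le_mul hQs hΓs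
  have h2 : (cQ * cΓ) * (cQ * cΓ) ≤ s ^ 4 := by
    calc (cQ * cΓ) * (cQ * cΓ) ≤ (s * s) * (s * s) := Nat.mul_le_mul h1 h1
    _ = s ^ 4 := by ring
  have h3 : cQ * (cΓ * cQ) ≤ s ^ 3 := by
    calc cQ * (cΓ * cQ) ≤ s * (s * s) := Nat.mul_le_mul hQs (Nat.mul_le_mul hΓs hQs)
    _ = s ^ 3 := by ring
  have h4 : 2 ^ (cQ * (cΓ * cQ)) ≤ s ^ s ^ 3 :=
    le_trans (Nat.pow_le_pow_left (by omega) _) (Nat.pow_le_pow_right (by omega) h3)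
  have h5 : (cQ * cΓ) * (cQ * cΓ) * 2 ^ (cQ * (cΓ * cQ)) ≤ s ^ 4 * s ^ s ^ 3 :=
    Nat.mul_le_mul h2 h4
  have h6 : s ^ (s ^ 3 + 4) = s ^ 4 * s ^ s ^ 3 := by
    rw [pow_add]; ring
  have e1 : s ≤ s ^ 3 := Nat.le_self_pow (by norm_num) s
  have e2 : 4 * s ^ 3 ≤ s * s ^ 3 := Nat.mul_le_mul_right _ hs4
  have e3 : s * s ^ 3 = s ^ 4 := by ring
  have h7 : s ^ 3 + 4 ≤ s ^ 4 := by omega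
  have h8 : s ^ (s ^ 3 + 4) ≤ s ^ s ^ 4 := Nat.pow_le_pow_right (by omega) h7
  have h9 : 1 ≤ s ^ s ^ 4 := Nat.one_le_pow _ _ (by omega)
  have h10 : s ^ (s ^ 4 + 1) = s ^ s ^ 4 * s := pow_succ s (s ^ 4)
  have h11 : s ^ s ^ 4 * 4 ≤ s ^ s ^ 4 * s := Nat.mul_le_mul_left _ hs4
  have h12 : (cQ * cΓ) * (cQ * cΓ) * 2 ^ (cQ * (cΓ * cQ)) ≤ s ^ s ^ 4 :=
    le_trans h5 (le_trans (le_of_eq h6.symm) h8)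
  omega

end PDSProof

/-- For a PDS in push-pop normal form, with `E = |P|^(|P|^4 + 1)`: whenever
`pα →* qβ`, then `Dist(pα, qβ) ≤ (|α| + |β|) · E`. -/
theorem stmt_5 (Q Γ A : Type) [Fintype Q] [Fintype Γ] [Fintype A]
    (P : PDS Q Γ A) (hpp : P.PushPop) (p q : Q) (α β : List Γ)
    (hreach : P.Reach (p, Sum.inl α) (q, Sum.inl β)) :
    ∃ m : ℕ, P.StepN m (p, Sum.inl α) (q, Sum.inl β) ∧
      m ≤ (α.length + β.length) * P.size ^ (P.size ^ 4 + 1) := by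
  rcases P.Δ.eq_empty_or_nonempty with hΔ | hΔ
  · have heq := reach_eq_of_empty hΔ hreach
    exact ⟨0, heq, Nat.zero_le _⟩
  · obtain ⟨δ, hδ⟩ := hΔ
    haveI : Nonempty Q := ⟨δ.1⟩
    haveI : Nonempty Γ := ⟨δ.2.1⟩
    haveI : Nonempty A := ⟨δ.2.2.1⟩
    have hQ : 1 ≤ Fintype.card Q := Fintype.card_pos
    have hΓ : 1 ≤ Fintype.card Γ := Fintype.card_pos
    have hA : 1 ≤ Fintype.card A := Fintype.card_pos
    have hΔc : 1 ≤ P.Δ.card := Finset.card_pos.mpr ⟨δ, hδ⟩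
    have hM : 1 ≤ Fintype.card ((Q × Γ) × (Q × Γ)) := Fintype.card_pos
    obtain ⟨n, hn⟩ := reach_stepN hreach
    obtain ⟨m, hm, hrun⟩ := mainlem P hpp hM n p α q β hn
    refine ⟨m, hrun, le_trans hm ?_⟩
    exact Nat.mul_le_mul_left _ (KC_le_E P hQ hΓ hA hΔc)
end

section
/- For every pushdown system P = (Q, Γ, A, Δ) in push-pop normal form, all p, q ∈ Q and all X, Y ∈ Γ: if pX →* qY, then Dist(pX, qY) ≤ |P|^{|P|⁴+1} − 1. -/
section Aux

namespace PDS

variable {Q Γ A : Type}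

lemma step_single {P : PDS Q Γ A} {p : Q} {X : Γ} {a : A} {q : Q} {γ : List Γ}
    (hδ : (p, X, a, q, γ) ∈ P.Δ) (l : List Γ) :
    P.Step a (p, Sum.inl (X :: l)) (q, Sum.inl (γ ++ l)) :=
  ⟨p, X, q, γ, Sum.inl l, hδ, rfl, rfl⟩

lemma step_inl_inv {P : PDS Q Γ A} {a : A} {p0 : Q} {L : List Γ} {t : Q × SC Γ}
    (h : P.Step a (p0, Sum.inl L) t) :
    ∃ X l q γ, (p0, X, a, q, γ) ∈ P.Δ ∧ L = X :: l ∧ t = (q, Sum.inl (γ ++ l)) := by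
  obtain ⟨p, X, q, γ, σ, hδ, hs, ht⟩ := h
  cases σ with
  | inl l =>
      have hp : p0 = p := congrArg Prod.fst hs
      have hL : (Sum.inl L : SC Γ) = Sum.inl (X :: l) := congrArg Prod.snd hs
      have hL' : L = X :: l := Sum.inl.inj hL
      subst hp
      exact ⟨X, l, q, γ, hδ, hL', ht⟩
  | inr s =>
      have hL : (Sum.inl L : SC Γ) = Sum.inr (Stream'.cons X s) := congrArg Prod.snd hs
      exact absurd hL (by simp [SC.cons])

lemma no_step_empty {P : PDS Q Γ A} {p : Q} {t : Q × SC Γ}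
    (h : P.StepAny (p, Sum.inl ([] : List Γ)) t) : False := by
  obtain ⟨a, h⟩ := h
  obtain ⟨X, l, q, γ, _, hL, _⟩ := step_inl_inv h
  cases hL

lemma stepN_zero {P : PDS Q Γ A} {s t : Q × SC Γ} : P.StepN 0 s t ↔ s = t := Iff.rfl

lemma stepN_succ {P : PDS Q Γ A} {n : ℕ} {s t : Q × SC Γ} :
    P.StepN (n + 1) s t ↔ ∃ u, P.StepAny s u ∧ P.StepN n u t := Iff.rfl

lemma stepN_concat {P : PDS Q Γ A} :
    ∀ {m1 : ℕ} {s u : Q × SC Γ}, P.StepN m1 s u →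
      ∀ {m2 : ℕ} {t : Q × SC Γ}, P.StepN m2 u t → P.StepN (m1 + m2) s t := by
  intro m1
  induction m1 with
  | zero => intro s u h m2 t h2; rw [stepN_zero] at h; subst h; simpa using h2
  | succ m ih =>
      intro s u h m2 t h2
      obtain ⟨v, hv, hrest⟩ := h
      have : P.StepN (m + m2) v t := ih hrest h2
      exact (by rw [Nat.succ_add]; exact ⟨v, hv, this⟩)

lemma stepN_one {P : PDS Q Γ A} {s t : Q × SC Γ} (h : P.StepAny s t) : P.StepN 1 s t :=
  ⟨t, h, rfl⟩

lemma stepN_of_reach {P : PDS Q Γ A} {s t : Q × SC Γ} (h : P.Reach s t) :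
    ∃ m, P.StepN m s t := by
  induction h with
  | refl => exact ⟨0, rfl⟩
  | tail _ hst ih =>
      obtain ⟨m, hm⟩ := ih
      exact ⟨m + 1, stepN_concat hm (stepN_one hst)⟩

lemma stepN_empty {P : PDS Q Γ A} {m : ℕ} {p : Q} {t : Q × SC Γ}
    (h : P.StepN m (p, Sum.inl ([] : List Γ)) t) : m = 0 ∧ t = (p, Sum.inl []) := by
  cases m with
  | zero => exact ⟨rfl, h.symm⟩
  | succ m => obtain ⟨u, hu, _⟩ := h; exact absurd hu no_step_empty

lemma stepN_lift {P : PDS Q Γ A} (τ : List Γ) :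
    ∀ {m : ℕ} {p : Q} {α : List Γ} {q : Q} {α' : List Γ},
      P.StepN m (p, Sum.inl α) (q, Sum.inl α') →
      P.StepN m (p, Sum.inl (α ++ τ)) (q, Sum.inl (α' ++ τ)) := by
  intro m
  induction m with
  | zero =>
      intro p α q α' h
      rw [stepN_zero] at h
      have h1 : p = q := congrArg Prod.fst h
      have h2 : α = α' := Sum.inl.inj (congrArg Prod.snd h)
      subst h1; subst h2; rfl
  | succ m ih =>
      rintro p α q α' ⟨u, ⟨a, hs⟩, hrest⟩
      obtain ⟨X, l, q1, γ, hδ, hα, hu⟩ := step_inl_inv hs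
      subst hα; subst hu
      refine ⟨(q1, Sum.inl (γ ++ (l ++ τ))), ⟨a, step_single hδ (l ++ τ)⟩, ?_⟩
      have := ih (α' := α') hrest
      simpa [List.append_assoc] using this

end PDS

end Aux
section Aux2
namespace PDS
variable {Q Γ A : Type}

/-- Split lemma: a path from `p (α W)` down to a stack of height ≤ 1 must pass
through `(r, [W])` for some `r`, with the first part a lifted path from `p α` to `r ε`. -/
lemma stepN_split {P : PDS Q Γ A} {W : Γ} {qf : Q} {τ : List Γ} (hτ : τ.length ≤ 1) :
    ∀ {m : ℕ} {p : Q} {α : List Γ}, α ≠ [] →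
      P.StepN m (p, Sum.inl (α ++ [W])) (qf, Sum.inl τ) →
      ∃ m1 m2 r, m = m1 + m2 ∧ P.StepN m1 (p, Sum.inl α) (r, Sum.inl ([] : List Γ)) ∧
        P.StepN m2 (r, Sum.inl [W]) (qf, Sum.inl τ) := by
  intro m
  induction m with
  | zero =>
      intro p α hα h
      rw [stepN_zero] at h
      have h2 : α ++ [W] = τ := Sum.inl.inj (congrArg Prod.snd h)
      have : 2 ≤ τ.length := by
        rw [← h2, List.length_append]
        have : 1 ≤ α.length := Nat.one_le_iff_ne_zero.2 (by simpa using hα)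
        simp; omega
      omega
  | succ m ih =>
      rintro p α hα ⟨u, ⟨a, hs⟩, hrest⟩
      obtain ⟨X, αr, rfl⟩ : ∃ X αr, α = X :: αr := by
        cases α with
        | nil => exact absurd rfl hα
        | cons X αr => exact ⟨X, αr, rfl⟩
      obtain ⟨X', l, q1, γ, hδ, hL, hu⟩ := step_inl_inv hs
      have hX : X' = X := (List.cons.injEq _ _ _ _ ▸ hL).1.symm
      have hl : l = αr ++ [W] := by
        have := (List.cons.injEq _ _ _ _ ▸ hL).2; exact this.symm
      subst hX; subst hl; subst hu
      by_cases hc : γ ++ αr = []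
      · have hγ : γ = [] := by cases γ <;> simp_all
        have hαr : αr = [] := by cases αr <;> simp_all
        subst hγ; subst hαr
        refine ⟨1, m, q1, by omega, ?_, by simp only [List.nil_append] at hrest; exact hrest⟩
        exact stepN_one ⟨a, step_single hδ []⟩
      · have hrest' : P.StepN m (q1, Sum.inl ((γ ++ αr) ++ [W])) (qf, Sum.inl τ) := by
          simp only [List.append_assoc]; exact hrest
        obtain ⟨m1, m2, r, hm, h1, h2⟩ := ih hc hrest'
        refine ⟨m1 + 1, m2, r, by omega, ?_, h2⟩
        rw [Nat.add_comm]; exact stepN_concat (stepN_one ⟨a, step_single hδ αr⟩) h1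

/-- Pop derivations of height `k`: `PopH P k p X q` means `pX` can be emptied to `q`
with a derivation tree of height at most `k`. -/
def PopH (P : PDS Q Γ A) : ℕ → Q → Γ → Q → Prop
  | 0, _, _, _ => False
  | k + 1, p, X, q => ∃ a q' γ, (p, X, a, q', γ) ∈ P.Δ ∧
      ((γ = [] ∧ q' = q) ∨
       (∃ Z, γ = [Z] ∧ PopH P k q' Z q) ∨
       (∃ Z W r, γ = [Z, W] ∧ PopH P k q' Z r ∧ PopH P k r W q))

lemma popH_mono {P : PDS Q Γ A} :
    ∀ {k : ℕ} {p : Q} {X : Γ} {q : Q}, PopH P k p X q → PopH P (k + 1) p X q := by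
  intro k
  induction k with
  | zero => intro p X q h; exact h.elim
  | succ k ih =>
      rintro p X q ⟨a, q', γ, hδ, hc⟩
      refine ⟨a, q', γ, hδ, ?_⟩
      rcases hc with ⟨h1, h2⟩ | ⟨Z, hZ, h1⟩ | ⟨Z, W, r, hZW, h1, h2⟩
      · exact Or.inl ⟨h1, h2⟩
      · exact Or.inr (Or.inl ⟨Z, hZ, ih h1⟩)
      · exact Or.inr (Or.inr ⟨Z, W, r, hZW, ih h1, ih h2⟩)

lemma popH_le {P : PDS Q Γ A} {k k' : ℕ} (hk : k ≤ k') {p : Q} {X : Γ} {q : Q}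
    (h : PopH P k p X q) : PopH P k' p X q := by
  induction hk with
  | refl => exact h
  | step _ ih => exact popH_mono ih

end PDS
end Aux2
section Aux3

/-- A monotone, step-determined sequence of finsets over a fintype stabilizes by
stage `Fintype.card T`. -/
lemma finset_stab {T : Type} [Fintype T] (f : ℕ → Finset T)
    (hm : ∀ k, f k ⊆ f (k + 1))
    (hd : ∀ k, f k = f (k + 1) → f (k + 1) = f (k + 2)) :
    ∀ k, f k ⊆ f (Fintype.card T) := by
  set N := Fintype.card T with hN
  have hmono : ∀ {i j : ℕ}, i ≤ j → f i ⊆ f j := by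
    intro i j h
    induction h with
    | refl => exact Finset.Subset.refl _
    | step _ ih => exact ih.trans (hm _)
  have hfix : ∀ k, f k = f (k + 1) → ∀ d, f (k + d) = f k ∧ f (k + d) = f (k + d + 1) := by
    intro k hk d
    induction d with
    | zero => exact ⟨rfl, hk⟩
    | succ d ih =>
        obtain ⟨h1, h2⟩ := ih
        constructor
        · rw [show k + (d + 1) = k + d + 1 by ring, ← h2, h1]
        · have := hd (k + d) h2
          rw [show k + (d + 1) = k + d + 1 by ring]
          exact this
  have hex : ∃ k ≤ N, f k = f (k + 1) := by
    by_contra hcon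
    push_neg at hcon
    have hcard : ∀ k ≤ N + 1, k ≤ (f k).card := by
      intro k hk
      induction k with
      | zero => exact Nat.zero_le _
      | succ k ih =>
          have hk' : k ≤ N := by omega
          have hss : f k ⊂ f (k + 1) := (Finset.ssubset_iff_of_subset (hm k)).2 <| by
            rcases Finset.exists_of_ssubset (lt_of_le_of_ne (hm k) (hcon k hk')) with ⟨x, hx1, hx2⟩
            exact ⟨x, hx1, hx2⟩
          have := Finset.card_lt_card hss
          have := ih (by omega)
          omega
    have h1 := hcard (N + 1) (le_refl _)
    have h2 : (f (N + 1)).card ≤ N := hN ▸ Finset.card_le_univ _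
    omega
  intro k
  obtain ⟨k0, hk0N, hk0⟩ := hex
  by_cases hkN : k ≤ N
  · exact hmono hkN
  · have : f k = f k0 := by
      have := (hfix k0 hk0 (k - k0)).1
      rwa [show k0 + (k - k0) = k by omega] at this
    rw [this]
    exact hmono hk0N

end Aux3
section Aux4
namespace PDS
variable {Q Γ A : Type}

lemma popH_congr {P : PDS Q Γ A} {k : ℕ}
    (h : ∀ p X q, PopH P k p X q ↔ PopH P (k + 1) p X q) :
    ∀ p X q, PopH P (k + 1) p X q ↔ PopH P (k + 2) p X q := by
  intro p X q
  constructor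
  · rintro ⟨a, q', γ, hδ, hc⟩
    refine ⟨a, q', γ, hδ, ?_⟩
    rcases hc with h1 | ⟨Z, hZ, h1⟩ | ⟨Z, W, r, hZW, h1, h2⟩
    · exact Or.inl h1
    · exact Or.inr (Or.inl ⟨Z, hZ, (h _ _ _).1 h1⟩)
    · exact Or.inr (Or.inr ⟨Z, W, r, hZW, (h _ _ _).1 h1, (h _ _ _).1 h2⟩)
  · rintro ⟨a, q', γ, hδ, hc⟩
    refine ⟨a, q', γ, hδ, ?_⟩
    rcases hc with h1 | ⟨Z, hZ, h1⟩ | ⟨Z, W, r, hZW, h1, h2⟩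
    · exact Or.inl h1
    · exact Or.inr (Or.inl ⟨Z, hZ, (h _ _ _).2 h1⟩)
    · exact Or.inr (Or.inr ⟨Z, W, r, hZW, (h _ _ _).2 h1, (h _ _ _).2 h2⟩)

lemma popH_bounded {P : PDS Q Γ A} [Fintype Q] [Fintype Γ] {k : ℕ} {p : Q} {X : Γ} {q : Q}
    (h : PopH P k p X q) : PopH P (Fintype.card (Q × Γ × Q)) p X q := by
  classical
  set f : ℕ → Finset (Q × Γ × Q) :=
    fun k => Finset.univ.filter (fun t => PopH P k t.1 t.2.1 t.2.2) with hf
  have hmem : ∀ k p X q, (p, X, q) ∈ f k ↔ PopH P k p X q := by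
    intro k p X q; simp [hf]
  have hm : ∀ k, f k ⊆ f (k + 1) := by
    intro k t ht
    rw [hf, Finset.mem_filter] at ht ⊢
    exact ⟨ht.1, popH_mono ht.2⟩
  have hd : ∀ k, f k = f (k + 1) → f (k + 1) = f (k + 2) := by
    intro k hk
    have hiff : ∀ p X q, PopH P k p X q ↔ PopH P (k + 1) p X q := by
      intro p X q
      rw [← hmem k p X q, ← hmem (k + 1) p X q, hk]
    ext t
    rw [hf, Finset.mem_filter, Finset.mem_filter]
    exact and_congr_right fun _ => popH_congr hiff t.1 t.2.1 t.2.2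
  have := finset_stab f hm hd k ((hmem k p X q).2 h)
  exact (hmem _ p X q).1 this

/-- From a height-`k` pop derivation, a pop path of length at most `2^k - 1`. -/
lemma popH_bound {P : PDS Q Γ A} :
    ∀ {k : ℕ} {p : Q} {X : Γ} {q : Q}, PopH P k p X q →
      ∃ m ≤ 2 ^ k - 1, P.StepN m (p, Sum.inl [X]) (q, Sum.inl ([] : List Γ)) := by
  intro k
  induction k with
  | zero => intro p X q h; exact h.elim
  | succ k ih =>
      rintro p X q ⟨a, q', γ, hδ, hc⟩
      have h2k : 1 ≤ 2 ^ k := Nat.one_le_two_pow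
      rcases hc with ⟨hγ, hq⟩ | ⟨Z, hγ, h1⟩ | ⟨Z, W, r, hγ, h1, h2⟩
      · subst hγ; subst hq
        refine ⟨1, by simp [Nat.pow_succ]; omega, ?_⟩
        exact stepN_one ⟨a, by simpa using step_single hδ []⟩
      · subst hγ
        obtain ⟨m1, hm1, hp1⟩ := ih h1
        refine ⟨1 + m1, by rw [Nat.pow_succ]; omega, ?_⟩
        exact stepN_concat (stepN_one ⟨a, by simpa using step_single hδ []⟩) hp1
      · subst hγ
        obtain ⟨m1, hm1, hp1⟩ := ih h1
        obtain ⟨m2, hm2, hp2⟩ := ih h2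
        refine ⟨1 + (m1 + m2), by rw [Nat.pow_succ]; omega, ?_⟩
        refine stepN_concat (stepN_one ⟨a, by simpa using step_single hδ []⟩) ?_
        have hlift : P.StepN m1 (q', Sum.inl ([Z] ++ [W])) (r, Sum.inl ([] ++ [W])) :=
          stepN_lift [W] hp1
        simp only [List.cons_append, List.nil_append] at hlift
        exact stepN_concat hlift hp2

/-- Every actual pop path gives a pop derivation of some height. -/
lemma popH_of_stepN {P : PDS Q Γ A} (hpp : P.PushPop) :
    ∀ {m : ℕ} {p : Q} {X : Γ} {q : Q},
      P.StepN m (p, Sum.inl [X]) (q, Sum.inl ([] : List Γ)) → ∃ k, PopH P k p X q := by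
  intro m
  induction m using Nat.strong_induction_on with
  | _ m ihm =>
    intro p X q h
    cases m with
    | zero =>
        rw [stepN_zero] at h
        exact absurd (Sum.inl.inj (congrArg Prod.snd h)) (by simp)
    | succ m =>
        obtain ⟨u, ⟨a, hs⟩, hrest⟩ := h
        obtain ⟨X', l, q1, γ, hδ, hL, hu⟩ := step_inl_inv hs
        have hX : X' = X := by simp_all
        have hl : l = [] := by simp_all
        subst hX; subst hl; subst hu
        have hγ2 : γ.length ≤ 2 := hpp _ hδ
        simp only [List.append_nil] at hrest
        match γ, hγ2, hδ, hrest with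
        | [], _, hδ, hrest =>
            obtain ⟨hm0, ht⟩ := stepN_empty hrest
            have hq : q1 = q := congrArg Prod.fst ht.symm
            subst hq
            exact ⟨1, a, q1, [], hδ, Or.inl ⟨rfl, rfl⟩⟩
        | [Z], _, hδ, hrest =>
            obtain ⟨k, hk⟩ := ihm m (by omega) hrest
            exact ⟨k + 1, a, q1, [Z], hδ, Or.inr (Or.inl ⟨Z, rfl, hk⟩)⟩
        | [Z, W], _, hδ, hrest =>
            have hrest' : P.StepN m (q1, Sum.inl ([Z] ++ [W])) (q, Sum.inl ([] : List Γ)) := by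
              simp only [List.cons_append, List.nil_append]; exact hrest
            obtain ⟨m1, m2, r, hm, h1, h2⟩ := stepN_split (by simp) (by simp) hrest'
            obtain ⟨k1, hk1⟩ := ihm m1 (by omega) h1
            obtain ⟨k2, hk2⟩ := ihm m2 (by omega) h2
            refine ⟨max k1 k2 + 1, a, q1, [Z, W], hδ, Or.inr (Or.inr ⟨Z, W, r, rfl, ?_, ?_⟩)⟩
            · exact popH_le (le_max_left _ _) hk1
            · exact popH_le (le_max_right _ _) hk2

end PDS
end Aux4
section Aux5
namespace PDS
variable {Q Γ A : Type}

/-- Head reachability within `k` macro-steps. -/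
def ReachH (P : PDS Q Γ A) : ℕ → Q → Γ → Q → Γ → Prop
  | 0, p, X, q, Y => p = q ∧ X = Y
  | k + 1, p, X, q, Y => (p = q ∧ X = Y) ∨
      ∃ a q' γ, (p, X, a, q', γ) ∈ P.Δ ∧
        ((∃ Z, γ = [Z] ∧ ReachH P k q' Z q Y) ∨
         (∃ Z W r, γ = [Z, W] ∧ (∃ j, PopH P j q' Z r) ∧ ReachH P k r W q Y))

lemma reachH_mono {P : PDS Q Γ A} :
    ∀ {k : ℕ} {p : Q} {X : Γ} {q : Q} {Y : Γ},
      ReachH P k p X q Y → ReachH P (k + 1) p X q Y := by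
  intro k
  induction k with
  | zero => intro p X q Y h; exact Or.inl h
  | succ k ih =>
      rintro p X q Y (h | ⟨a, q', γ, hδ, hc⟩)
      · exact Or.inl h
      refine Or.inr ⟨a, q', γ, hδ, ?_⟩
      rcases hc with ⟨Z, hZ, h1⟩ | ⟨Z, W, r, hZW, h1, h2⟩
      · exact Or.inl ⟨Z, hZ, ih h1⟩
      · exact Or.inr ⟨Z, W, r, hZW, h1, ih h2⟩

lemma reachH_le {P : PDS Q Γ A} {k k' : ℕ} (hk : k ≤ k') {p : Q} {X : Γ} {q : Q} {Y : Γ}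
    (h : ReachH P k p X q Y) : ReachH P k' p X q Y := by
  induction hk with
  | refl => exact h
  | step _ ih => exact reachH_mono ih

lemma reachH_congr {P : PDS Q Γ A} {k : ℕ}
    (h : ∀ p X q Y, ReachH P k p X q Y ↔ ReachH P (k + 1) p X q Y) :
    ∀ p X q Y, ReachH P (k + 1) p X q Y ↔ ReachH P (k + 2) p X q Y := by
  intro p X q Y
  constructor
  · exact reachH_mono
  · rintro (h0 | ⟨a, q', γ, hδ, hc⟩)
    · exact Or.inl h0
    refine Or.inr ⟨a, q', γ, hδ, ?_⟩
    rcases hc with ⟨Z, hZ, h1⟩ | ⟨Z, W, r, hZW, h1, h2⟩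
    · exact Or.inl ⟨Z, hZ, (h _ _ _ _).2 h1⟩
    · exact Or.inr ⟨Z, W, r, hZW, h1, (h _ _ _ _).2 h2⟩

lemma reachH_bounded {P : PDS Q Γ A} [Fintype Q] [Fintype Γ] {k : ℕ}
    {p : Q} {X : Γ} {q : Q} {Y : Γ} (h : ReachH P k p X q Y) :
    ReachH P (Fintype.card (Q × Γ × Q × Γ)) p X q Y := by
  classical
  set f : ℕ → Finset (Q × Γ × Q × Γ) :=
    fun k => Finset.univ.filter (fun t => ReachH P k t.1 t.2.1 t.2.2.1 t.2.2.2) with hf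
  have hmem : ∀ k p X q Y, (p, X, q, Y) ∈ f k ↔ ReachH P k p X q Y := by
    intro k p X q Y; simp [hf]
  have hm : ∀ k, f k ⊆ f (k + 1) := by
    intro k t ht
    rw [hf, Finset.mem_filter] at ht ⊢
    exact ⟨ht.1, reachH_mono ht.2⟩
  have hd : ∀ k, f k = f (k + 1) → f (k + 1) = f (k + 2) := by
    intro k hk
    have hiff : ∀ p X q Y, ReachH P k p X q Y ↔ ReachH P (k + 1) p X q Y := by
      intro p X q Y
      rw [← hmem k p X q Y, ← hmem (k + 1) p X q Y, hk]
    ext t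
    rw [hf, Finset.mem_filter, Finset.mem_filter]
    exact and_congr_right fun _ => reachH_congr hiff t.1 t.2.1 t.2.2.1 t.2.2.2
  have := finset_stab f hm hd k ((hmem k p X q Y).2 h)
  exact (hmem _ p X q Y).1 this

/-- From a `ReachH k` certificate, a path of length at most `k * 2 ^ N1` where
`N1 = card (Q × Γ × Q)`. -/
lemma reachH_bound {P : PDS Q Γ A} [Fintype Q] [Fintype Γ] :
    ∀ {k : ℕ} {p : Q} {X : Γ} {q : Q} {Y : Γ}, ReachH P k p X q Y →
      ∃ m ≤ k * 2 ^ (Fintype.card (Q × Γ × Q)),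
        P.StepN m (p, Sum.inl [X]) (q, Sum.inl [Y]) := by
  set N1 := Fintype.card (Q × Γ × Q) with hN1
  intro k
  induction k with
  | zero =>
      rintro p X q Y ⟨rfl, rfl⟩
      exact ⟨0, by omega, rfl⟩
  | succ k ih =>
      rintro p X q Y (⟨rfl, rfl⟩ | ⟨a, q', γ, hδ, hc⟩)
      · exact ⟨0, by omega, rfl⟩
      have h2 : 1 ≤ 2 ^ N1 := Nat.one_le_two_pow
      rcases hc with ⟨Z, hγ, h1⟩ | ⟨Z, W, r, hγ, ⟨j, hj⟩, h2'⟩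
      · subst hγ
        obtain ⟨m1, hm1, hp1⟩ := ih h1
        refine ⟨1 + m1, by rw [Nat.succ_mul]; omega, ?_⟩
        exact stepN_concat (stepN_one ⟨a, by simpa using step_single hδ []⟩) hp1
      · subst hγ
        have hjb := popH_bounded hj
        obtain ⟨m1, hm1, hp1⟩ := popH_bound hjb
        rw [← hN1] at hm1
        obtain ⟨m2, hm2, hp2⟩ := ih h2'
        refine ⟨1 + (m1 + m2), by rw [Nat.succ_mul]; omega, ?_⟩
        refine stepN_concat (stepN_one ⟨a, by simpa using step_single hδ []⟩) ?_
        have hlift : P.StepN m1 (q', Sum.inl ([Z] ++ [W])) (r, Sum.inl ([] ++ [W])) :=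
          stepN_lift [W] hp1
        simp only [List.cons_append, List.nil_append] at hlift
        exact stepN_concat hlift hp2

/-- Every actual head-to-head path gives a `ReachH` certificate. -/
lemma reachH_of_stepN {P : PDS Q Γ A} (hpp : P.PushPop) :
    ∀ {m : ℕ} {p : Q} {X : Γ} {q : Q} {Y : Γ},
      P.StepN m (p, Sum.inl [X]) (q, Sum.inl [Y]) → ∃ k, ReachH P k p X q Y := by
  intro m
  induction m using Nat.strong_induction_on with
  | _ m ihm =>
    intro p X q Y h
    cases m with
    | zero =>
        rw [stepN_zero] at h
        have h1 : p = q := congrArg Prod.fst h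
        have h2 : X = Y := by
          have := Sum.inl.inj (congrArg Prod.snd h); simpa using this
        exact ⟨0, h1, h2⟩
    | succ m =>
        obtain ⟨u, ⟨a, hs⟩, hrest⟩ := h
        obtain ⟨X', l, q1, γ, hδ, hL, hu⟩ := step_inl_inv hs
        have hX : X' = X := by simp_all
        have hl : l = [] := by simp_all
        subst hX; subst hl; subst hu
        have hγ2 : γ.length ≤ 2 := hpp _ hδ
        simp only [List.append_nil] at hrest
        match γ, hγ2, hδ, hrest with
        | [], _, hδ, hrest =>
            obtain ⟨hm0, ht⟩ := stepN_empty hrest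
            have := Sum.inl.inj (congrArg Prod.snd ht)
            exact absurd this.symm (by simp)
        | [Z], _, hδ, hrest =>
            obtain ⟨k, hk⟩ := ihm m (by omega) hrest
            exact ⟨k + 1, Or.inr ⟨a, q1, [Z], hδ, Or.inl ⟨Z, rfl, hk⟩⟩⟩
        | [Z, W], _, hδ, hrest =>
            have hrest' : P.StepN m (q1, Sum.inl ([Z] ++ [W])) (q, Sum.inl [Y]) := by
              simp only [List.cons_append, List.nil_append]; exact hrest
            obtain ⟨m1, m2, r, hm, h1, h2⟩ := stepN_split (by simp) (by simp) hrest'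
            obtain ⟨j, hj⟩ := popH_of_stepN hpp h1
            obtain ⟨k2, hk2⟩ := ihm m2 (by omega) h2
            exact ⟨k2 + 1, Or.inr ⟨a, q1, [Z, W], hδ,
              Or.inr ⟨Z, W, r, rfl, ⟨j, hj⟩, hk2⟩⟩⟩

end PDS
end Aux5
/-- For a PDS in push-pop normal form: if `pX →* qY` (single stack symbols), then
`Dist(pX, qY) ≤ |P|^(|P|^4 + 1) − 1`. -/
theorem stmt_6 (Q Γ A : Type) [Fintype Q] [Fintype Γ] [Fintype A]
    (P : PDS Q Γ A) (hpp : P.PushPop) (p q : Q) (X Y : Γ)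
    (hreach : P.Reach (p, Sum.inl [X]) (q, Sum.inl [Y])) :
    ∃ m : ℕ, P.StepN m (p, Sum.inl [X]) (q, Sum.inl [Y]) ∧
      m ≤ P.size ^ (P.size ^ 4 + 1) - 1 := by
  obtain ⟨m0, hm0⟩ := PDS.stepN_of_reach hreach
  obtain ⟨k, hk⟩ := PDS.reachH_of_stepN hpp hm0
  have hk' := PDS.reachH_bounded hk
  obtain ⟨m, hmle, hm⟩ := PDS.reachH_bound hk'
  refine ⟨m, hm, ?_⟩
  -- arithmetic
  set n := P.size with hn
  have hQ : 1 ≤ Fintype.card Q := Fintype.card_pos_iff.2 ⟨p⟩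
  have hΓ : 1 ≤ Fintype.card Γ := Fintype.card_pos_iff.2 ⟨X⟩
  have han : Fintype.card Q ≤ n := by
    rw [hn]; unfold PDS.size; omega
  have hbn : Fintype.card Γ ≤ n := by
    rw [hn]; unfold PDS.size; omega
  have hn2 : 2 ≤ n := by
    rw [hn]; unfold PDS.size; omega
  have hN1 : Fintype.card (Q × Γ × Q) ≤ n ^ 3 := by
    have h1 : Fintype.card (Q × Γ × Q) =
        Fintype.card Q * (Fintype.card Γ * Fintype.card Q) := by
      simp [Fintype.card_prod]
    have h2 : Fintype.card Q * (Fintype.card Γ * Fintype.card Q) ≤ n * (n * n) :=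
      Nat.mul_le_mul han (Nat.mul_le_mul hbn han)
    have h3 : n * (n * n) = n ^ 3 := by ring
    omega
  have hN2 : Fintype.card (Q × Γ × Q × Γ) ≤ n ^ 4 := by
    have h1 : Fintype.card (Q × Γ × Q × Γ) =
        Fintype.card Q * (Fintype.card Γ * (Fintype.card Q * Fintype.card Γ)) := by
      simp [Fintype.card_prod]
    have h2 : Fintype.card Q * (Fintype.card Γ * (Fintype.card Q * Fintype.card Γ)) ≤
        n * (n * (n * n)) :=
      Nat.mul_le_mul han (Nat.mul_le_mul hbn (Nat.mul_le_mul han hbn))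
    have h3 : n * (n * (n * n)) = n ^ 4 := by ring
    omega
  have step1 : m ≤ n ^ 4 * 2 ^ (n ^ 3) := by
    calc m ≤ Fintype.card (Q × Γ × Q × Γ) * 2 ^ Fintype.card (Q × Γ × Q) := hmle
      _ ≤ n ^ 4 * 2 ^ (n ^ 3) :=
          Nat.mul_le_mul hN2 (Nat.pow_le_pow_right (by norm_num) hN1)
  have step2 : n ^ 4 * 2 ^ (n ^ 3) ≤ n ^ (n ^ 3 + 4) := by
    have h1 : (2 : ℕ) ^ (n ^ 3) ≤ n ^ (n ^ 3) := Nat.pow_le_pow_left hn2 _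
    calc n ^ 4 * 2 ^ (n ^ 3) ≤ n ^ 4 * n ^ (n ^ 3) := Nat.mul_le_mul_left _ h1
      _ = n ^ (n ^ 3 + 4) := by rw [← pow_add]; ring_nf
  have h34 : n ^ 3 + 4 ≤ n ^ 4 := by
    have f1 : n ^ 3 * 2 ≤ n ^ 3 * n := Nat.mul_le_mul_left _ hn2
    have f2 : n ^ 3 * n = n ^ 4 := by ring
    have f3 : (8 : ℕ) ≤ n ^ 3 := by
      calc (8 : ℕ) = 2 ^ 3 := by norm_num
        _ ≤ n ^ 3 := Nat.pow_le_pow_left hn2 3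
    omega
  have step3 : n ^ (n ^ 3 + 4) ≤ n ^ (n ^ 4) :=
    Nat.pow_le_pow_right (by omega) h34
  have step4 : n ^ (n ^ 4) ≤ n ^ (n ^ 4 + 1) - 1 := by
    have g1 : n ^ (n ^ 4) * 2 ≤ n ^ (n ^ 4) * n := Nat.mul_le_mul_left _ hn2
    have g2 : n ^ (n ^ 4) * n = n ^ (n ^ 4 + 1) := (pow_succ n _).symm
    have g3 : 1 ≤ n ^ (n ^ 4) := Nat.one_le_pow _ _ (by omega)
    omega
  omega
end

section
/- For every pushdown system P = (Q, Γ, A, Δ) in push-pop normal form, setting F = 2^{9·2^{|Q|²}} · |P|²: every configuration qδ of P reachable from an initial configuration q₀α₀ with |δ| ≥ F + |α₀| can be written as qδ = qαβγ, where (α, β) is a linked pair, |α|, |β| ≤ F, and all configurations of the form qαβ^iγ (for i ∈ ℕ) are reachable from q₀α₀. -/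
set_option linter.unusedSectionVars false
set_option linter.unusedVariables false
attribute [local instance] Classical.propDecidable

namespace CombX

variable {M : Type*} [Monoid M] [Fintype M]

def JPre (x y : M) : Prop := ∃ a b : M, x = a * y * b

lemma jpre_refl (x : M) : JPre x x := ⟨1, 1, by simp⟩

lemma jpre_trans {x y z : M} (h1 : JPre x y) (h2 : JPre y z) : JPre x z := by
  obtain ⟨a, b, rfl⟩ := h1
  obtain ⟨c, d, rfl⟩ := h2
  exact ⟨a * c, d * b, by simp [mul_assoc]⟩

lemma pow_stable {A : M} {i p : ℕ} (h : A ^ i = A ^ (i + p)) :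
    ∀ m s, i ≤ s → A ^ (s + m * p) = A ^ s := by
  intro m
  induction m with
  | zero => simp
  | succ m ih =>
    intro s hs
    have h1 : A ^ (s + p) = A ^ s := by
      obtain ⟨r, rfl⟩ := Nat.exists_eq_add_of_le hs
      have e1 : i + r + p = (i + p) + r := by omega
      rw [e1, pow_add, ← h, ← pow_add]
    have e2 : s + (m + 1) * p = (s + p) + m * p := by ring
    rw [e2, ih (s + p) (by omega), h1]

lemma exists_idem_pow (A : M) : ∃ k, 1 ≤ k ∧ A ^ k * A ^ k = A ^ k := by
  obtain ⟨i, j, hne, hij⟩ := Finite.exists_ne_map_eq_of_infinite (fun n : ℕ => A ^ n)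
  wlog hlt : i < j generalizing i j
  · exact this j i hne.symm hij.symm (by omega)
  have hp1 : 1 ≤ j - i := by omega
  have h : A ^ i = A ^ (i + (j - i)) := by
    simpa [show i + (j - i) = j by omega] using hij
  refine ⟨(i + 1) * (j - i), Nat.mul_pos (by omega) (by omega), ?_⟩
  have hk : i ≤ (i + 1) * (j - i) := by nlinarith
  have := pow_stable h (i + 1) ((i + 1) * (j - i)) hk
  rw [← pow_add]
  exact this

lemma idem_of_stab {q v : M} (hqv : q * v = q) (hpre : JPre v q) : v * v = v := by
  obtain ⟨c, d, hv⟩ := hpre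
  set A := c * q with hA
  have h1 : A * v = A := by rw [hA, mul_assoc, hqv]
  have h2 : A * v * d = v := by rw [h1, hA]; exact hv.symm
  have hiter : ∀ k, A ^ k * v * d ^ k = v := by
    intro k; induction k with
    | zero => simp
    | succ k ih =>
      have e : A ^ (k + 1) * v * d ^ (k + 1) = A ^ k * (A * v * d) * d ^ k := by
        rw [pow_succ, pow_succ']
        simp [mul_assoc]
      rw [e, h2, ih]
  obtain ⟨k, hk1, hk2⟩ := exists_idem_pow A
  have h3 : A ^ k * v = v := by
    calc A ^ k * v = A ^ k * (A ^ k * v * d ^ k) := by rw [hiter k]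
    _ = A ^ k * A ^ k * v * d ^ k := by simp [mul_assoc]
    _ = A ^ k * v * d ^ k := by rw [hk2]
    _ = v := hiter k
  have h4 : A ^ k * v = A ^ k := by
    obtain ⟨k', rfl⟩ : ∃ k', k = k' + 1 := ⟨k - 1, by omega⟩
    calc A ^ (k' + 1) * v = A ^ k' * (A * v) := by rw [pow_succ, mul_assoc]
    _ = A ^ k' * A := by rw [h1]
    _ = A ^ (k' + 1) := by rw [← pow_succ]
  have hva : v = A ^ k := by rw [← h3, h4]
  rw [hva]; exact hk2

def IsMaxl (S : Finset M) (x : M) : Prop := ∀ y ∈ S, JPre x y → JPre y x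

lemma exists_maxl (S : Finset M) : S.Nonempty → ∃ x ∈ S, IsMaxl S x := by
  induction S using Finset.strongInduction with
  | _ S ih =>
    intro hS
    obtain ⟨x, hx⟩ := hS
    by_cases hE : (S.erase x).Nonempty
    · obtain ⟨m, hm, hmax⟩ := ih (S.erase x) (Finset.erase_ssubset hx) hE
      by_cases hc : JPre m x ∧ ¬ JPre x m
      · refine ⟨x, hx, ?_⟩
        intro y hy hxy
        rcases eq_or_ne y x with rfl | hne
        · exact jpre_refl y
        · have hym := hmax y (Finset.mem_erase.mpr ⟨hne, hy⟩) (jpre_trans hc.1 hxy)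
          exact jpre_trans hym hc.1
      · refine ⟨m, Finset.mem_of_mem_erase hm, ?_⟩
        intro y hy hmy
        rcases eq_or_ne y x with rfl | hne
        · rcases not_and_or.mp hc with h | h
          · exact absurd hmy h
          · exact not_not.mp h
        · exact hmax y (Finset.mem_erase.mpr ⟨hne, hy⟩) hmy
    · refine ⟨x, hx, ?_⟩
      intro y hy _
      have hyx : y = x := by
        by_contra hne
        exact hE ⟨y, Finset.mem_erase.mpr ⟨hne, hy⟩⟩
      subst hyx
      exact jpre_refl y

lemma prod_mem_of_closed {S : Finset M} (hS : ∀ a ∈ S, ∀ b ∈ S, a * b ∈ S) :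
    ∀ l : List M, l ≠ [] → (∀ x ∈ l, x ∈ S) → l.prod ∈ S := by
  intro l
  induction l with
  | nil => simp
  | cons a l ih =>
    intro _ hmem
    rcases eq_or_ne l [] with rfl | hl
    · simpa using hmem a (by simp)
    · rw [List.prod_cons]
      exact hS a (hmem a (by simp)) l.prod (ih hl (fun x hx => hmem x (by simp [hx])))

def EFree (w : List M) : Prop :=
  ∀ l₁ l₂ l₃ : List M, w = l₁ ++ l₂ ++ l₃ → l₂ ≠ [] → l₂.prod * l₂.prod ≠ l₂.prod

lemma EFree.infix {w w' : List M} (h : EFree w) (hinf : w' <:+: w) : EFree w' := by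
  obtain ⟨s, t, hw⟩ := hinf
  intro l₁ l₂ l₃ hsp hne
  refine h (s ++ l₁) l₂ (l₃ ++ t) ?_ hne
  rw [← hw, hsp]
  simp [List.append_assoc]

lemma efree_drop {w : List M} (h : EFree w) (n : ℕ) : EFree (w.drop n) :=
  h.infix (w.drop_suffix n).isInfix

lemma prefix_prod_ne {S : Finset M} (hcl : ∀ a ∈ S, ∀ b ∈ S, a * b ∈ S) {w : List M}
    (hw : ∀ x ∈ w, x ∈ S) (hef : EFree w) {t t' : ℕ} (h1 : 1 ≤ t) (htt : t < t')
    (ht' : t' ≤ w.length) (hmax : IsMaxl S ((w.take t).prod)) :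
    (w.take t).prod ≠ (w.take t').prod := by
  intro heq
  set mid := (w.take t').drop t with hmid
  have hsplit : w.take t ++ mid = w.take t' := by
    have h := List.take_append_drop t (w.take t')
    rwa [List.take_take, min_eq_left htt.le] at h
  have hlen : mid.length = t' - t := by
    rw [hmid, List.length_drop, List.length_take, min_eq_left ht']
  have hmidne : mid ≠ [] := by
    intro hcon
    rw [hcon] at hlen
    simp at hlen
    omega
  have hinf : mid <:+: w := by
    refine ⟨w.take t, w.drop t', ?_⟩
    rw [show w.take t ++ mid ++ w.drop t' = (w.take t ++ mid) ++ w.drop t' by simp [List.append_assoc],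
      hsplit, List.take_append_drop]
  have hmidmem : ∀ x ∈ mid, x ∈ S := fun x hx => hw x (hinf.subset hx)
  have hpm : mid.prod ∈ S := prod_mem_of_closed hcl mid hmidne hmidmem
  have hq : (w.take t).prod * mid.prod = (w.take t).prod := by
    rw [← List.prod_append, hsplit, ← heq]
  have hjq : JPre ((w.take t).prod) mid.prod := ⟨(w.take t).prod, 1, by rw [mul_one, hq]⟩
  have hpre : JPre mid.prod ((w.take t).prod) := hmax _ hpm hjq
  have hidem := idem_of_stab hq hpre
  exact hef (w.take t) mid (w.drop t')
    (by rw [hsplit, List.take_append_drop]) hmidne hidem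

end CombX

namespace CombX

variable {M : Type*} [Monoid M] [Fintype M]

variable (S : Finset M)

def CutEx (w : List M) : Prop := ∃ t, 1 ≤ t ∧ t ≤ w.length ∧ ¬ IsMaxl S ((w.take t).prod)

noncomputable def blocks (w : List M) : List (List M) :=
  if h : CutEx S w then
    w.take (Nat.find h) :: blocks (w.drop (Nat.find h))
  else []
termination_by w.length
decreasing_by
  have h1 := (Nat.find_spec h).1
  have h2 := (Nat.find_spec h).2.1
  simp only [List.length_drop]
  omega

noncomputable def restW (w : List M) : List M :=
  if h : CutEx S w then restW (w.drop (Nat.find h)) else w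
termination_by w.length
decreasing_by
  have h1 := (Nat.find_spec h).1
  have h2 := (Nat.find_spec h).2.1
  simp only [List.length_drop]
  omega

lemma blocks_join : ∀ (n : ℕ) (w : List M), w.length ≤ n →
    (blocks S w).flatten ++ restW S w = w := by
  intro n
  induction n with
  | zero =>
    intro w hw
    have : w = [] := by cases w <;> simp_all
    subst this
    have hnc : ¬ CutEx S ([] : List M) := by
      rintro ⟨t, ht1, ht2, _⟩
      simp at ht2
      omega
    rw [blocks, restW, dif_neg hnc, dif_neg hnc]
    simp
  | succ n ih =>
    intro w hw
    rw [blocks, restW]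
    by_cases h : CutEx S w
    · rw [dif_pos h, dif_pos h]
      have h1 := (Nat.find_spec h).1
      have h2 := (Nat.find_spec h).2.1
      have hrec := ih (w.drop (Nat.find h)) (by simp only [List.length_drop]; omega)
      simp only [List.flatten_cons, List.append_assoc, hrec, List.take_append_drop]
    · rw [dif_neg h, dif_neg h]
      simp

end CombX
namespace CombX

variable {M : Type*} [Monoid M] [Fintype M]

variable (S : Finset M)

lemma prefix_count (hcl : ∀ a ∈ S, ∀ b ∈ S, a * b ∈ S) {w : List M}
    (hw : ∀ x ∈ w, x ∈ S) (hef : EFree w) {m : ℕ} (hm : m ≤ w.length)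
    (hmx : ∀ t, 1 ≤ t → t ≤ m → IsMaxl S ((w.take t).prod)) :
    m ≤ (S.filter (IsMaxl S)).card := by
  have hmaps : ∀ t ∈ Finset.Icc 1 m, (w.take t).prod ∈ S.filter (IsMaxl S) := by
    intro t ht
    rw [Finset.mem_Icc] at ht
    refine Finset.mem_filter.mpr ⟨?_, hmx t ht.1 ht.2⟩
    refine prod_mem_of_closed hcl _ ?_ (fun x hx => hw x (List.mem_of_mem_take hx))
    have : (w.take t).length = t := by
      rw [List.length_take]; omega
    intro hcon
    rw [hcon] at this
    simp at this
    omega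
  have hinj : Set.InjOn (fun t => (w.take t).prod) (Finset.Icc 1 m) := by
    intro a ha b hb hab
    simp only [Finset.coe_Icc, Set.mem_Icc] at ha hb
    rcases lt_trichotomy a b with h | h | h
    · exact absurd hab (prefix_prod_ne hcl hw hef ha.1 h (le_trans hb.2 hm) (hmx a ha.1 ha.2))
    · exact h
    · exact absurd hab.symm (prefix_prod_ne hcl hw hef hb.1 h (le_trans ha.2 hm) (hmx b hb.1 hb.2))
  have := Finset.card_le_card_of_injOn _ hmaps hinj
  simpa using this

lemma blocks_props (hcl : ∀ a ∈ S, ∀ b ∈ S, a * b ∈ S) :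
    ∀ (n : ℕ) (w : List M), w.length ≤ n → (∀ x ∈ w, x ∈ S) → EFree w →
    ∀ z ∈ blocks S w, z ≠ [] ∧ z.prod ∈ S ∧ ¬ IsMaxl S z.prod ∧
      z.length ≤ (S.filter (IsMaxl S)).card + 1 := by
  intro n
  induction n with
  | zero =>
    intro w hw _ _ z hz
    have : w = [] := by cases w <;> simp_all
    subst this
    have hnc : ¬ CutEx S ([] : List M) := by
      rintro ⟨t, ht1, ht2, _⟩; simp at ht2; omega
    rw [blocks, dif_neg hnc] at hz
    simp at hz
  | succ n ih =>
    intro w hw hmem hef z hz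
    rw [blocks] at hz
    by_cases h : CutEx S w
    · rw [dif_pos h] at hz
      have h1 := (Nat.find_spec h).1
      have h2 := (Nat.find_spec h).2.1
      rcases List.mem_cons.mp hz with rfl | hz'
      · refine ⟨?_, ?_, (Nat.find_spec h).2.2, ?_⟩
        · intro hcon
          have hlc := congrArg List.length hcon
          rw [List.length_take] at hlc
          simp only [List.length_nil] at hlc
          omega
        · refine prod_mem_of_closed hcl _ ?_ (fun x hx => hmem x (List.mem_of_mem_take hx))
          intro hcon
          have hlc := congrArg List.length hcon
          rw [List.length_take] at hlc
          simp only [List.length_nil] at hlc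
          omega
        · have hcount : Nat.find h - 1 ≤ (S.filter (IsMaxl S)).card := by
            refine prefix_count S hcl hmem hef (by omega) ?_
            intro t ht1 ht2
            have hlt : t < Nat.find h := by omega
            have := Nat.find_min h hlt
            simp only [not_and, not_not] at this
            exact this ht1 (by omega)
          rw [List.length_take]
          omega
      · have hdef : EFree (w.drop (Nat.find h)) := efree_drop hef _
        have hdm : ∀ x ∈ w.drop (Nat.find h), x ∈ S :=
          fun x hx => hmem x (List.mem_of_mem_drop hx)
        exact ih (w.drop (Nat.find h)) (by simp only [List.length_drop]; omega) hdm hdef z hz'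
    · rw [dif_neg h] at hz
      simp at hz

lemma restW_short (hcl : ∀ a ∈ S, ∀ b ∈ S, a * b ∈ S) :
    ∀ (n : ℕ) (w : List M), w.length ≤ n → (∀ x ∈ w, x ∈ S) → EFree w →
    (restW S w).length ≤ (S.filter (IsMaxl S)).card := by
  intro n
  induction n with
  | zero =>
    intro w hw _ _
    have : w = [] := by cases w <;> simp_all
    subst this
    have hnc : ¬ CutEx S ([] : List M) := by
      rintro ⟨t, ht1, ht2, _⟩; simp at ht2; omega
    rw [restW, dif_neg hnc]
    simp
  | succ n ih =>
    intro w hw hmem hef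
    rw [restW]
    by_cases h : CutEx S w
    · rw [dif_pos h]
      have h1 := (Nat.find_spec h).1
      exact ih (w.drop (Nat.find h)) (by simp only [List.length_drop]; omega)
        (fun x hx => hmem x (List.mem_of_mem_drop hx)) (efree_drop hef _)
    · rw [dif_neg h]
      refine prefix_count S hcl hmem hef le_rfl ?_
      intro t ht1 ht2
      by_contra hcon
      exact h ⟨t, ht1, ht2, hcon⟩

end CombX
namespace CombX

variable {M : Type*} [Monoid M] [Fintype M]

variable (S : Finset M)

lemma blocks_efree (hcl : ∀ a ∈ S, ∀ b ∈ S, a * b ∈ S) (w : List M)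
    (hmem : ∀ x ∈ w, x ∈ S) (hef : EFree w) : EFree ((blocks S w).map List.prod) := by
  intro l₁ l₂ l₃ heq hne hidem
  rw [List.append_assoc, List.map_eq_append_iff] at heq
  obtain ⟨B₁, B₂₃, hB, hB₁, hB₂₃⟩ := heq
  rw [List.map_eq_append_iff] at hB₂₃
  obtain ⟨B₂, B₃, hB', hB₂, hB₃⟩ := hB₂₃
  subst hB'
  have hjoin := blocks_join S w.length w le_rfl
  rw [hB] at hjoin
  have hprops := blocks_props S hcl w.length w le_rfl hmem hef
  have hB₂ne : B₂ ≠ [] := by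
    intro hcon
    subst hcon
    have : l₂ = [] := by simpa using hB₂.symm
    exact hne this
  have hfne : B₂.flatten ≠ [] := by
    intro hcon
    rw [List.flatten_eq_nil_iff] at hcon
    have hall := hcon
    obtain ⟨z, hz⟩ := List.exists_mem_of_ne_nil B₂ hB₂ne
    have hzB : z ∈ blocks S w := by rw [hB]; simp [hz]
    exact ((hprops z hzB).1) (hall z hz)
  have hsplitw : w = B₁.flatten ++ B₂.flatten ++ (B₃.flatten ++ restW S w) := by
    conv_lhs => rw [← hjoin]
    simp [List.flatten_append, List.append_assoc]
  have hprod : B₂.flatten.prod = l₂.prod := by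
    rw [List.prod_flatten, hB₂]
  exact hef _ _ _ hsplitw hfne (by rw [hprod]; exact hidem)

end CombX
namespace CombX

variable {M : Type*} [Monoid M] [Fintype M]

lemma efree_length : ∀ (n : ℕ) (S : Finset M), S.card ≤ n →
    (∀ a ∈ S, ∀ b ∈ S, a * b ∈ S) → ∀ w : List M, (∀ x ∈ w, x ∈ S) → EFree w →
    w.length + 1 ≤ 4 ^ S.card := by
  intro n
  induction n with
  | zero =>
    intro S hcard hcl w hw _
    have hS : S = ∅ := Finset.card_eq_zero.mp (by omega)
    subst hS
    cases w with
    | nil => simp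
    | cons a l => exact absurd (hw a (by simp)) (Finset.notMem_empty a)
  | succ n ih =>
    intro S hcard hcl w hw hef
    set c := (S.filter (IsMaxl S)).card with hc
    have hjoin := blocks_join S w.length w le_rfl
    have hprops := blocks_props S hcl w.length w le_rfl hw hef
    have hrest := restW_short S hcl w.length w le_rfl hw hef
    have hwlen : w.length + 1 ≤ ((blocks S w).length + 1) * (c + 1) := by
      have hlen1 : w.length = (blocks S w).flatten.length + (restW S w).length := by
        conv_lhs => rw [← hjoin]
        simp
      have hlen2 : (blocks S w).flatten.length ≤ (blocks S w).length * (c + 1) := by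
        rw [List.length_flatten]
        have hb : ∀ x ∈ (blocks S w).map List.length, x ≤ c + 1 := by
          intro x hx
          rw [List.mem_map] at hx
          obtain ⟨z, hz, rfl⟩ := hx
          exact (hprops z hz).2.2.2
        have := List.sum_le_card_nsmul ((blocks S w).map List.length) (c + 1) hb
        simpa [smul_eq_mul] using this
      have : w.length ≤ (blocks S w).length * (c + 1) + c := by omega
      nlinarith
    rcases Nat.eq_zero_or_pos (blocks S w).length with hz | hpos
    · have hcS : c ≤ S.card := by
        rw [hc]; exact Finset.card_filter_le _ _
      have h4 : S.card < 4 ^ S.card := Nat.lt_pow_self (by omega)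
      rw [hz] at hwlen
      simp at hwlen
      omega
    · -- there is at least one block, so S is nonempty and c ≥ 1
      obtain ⟨z, hzmem⟩ := List.exists_mem_of_ne_nil (blocks S w)
        (by intro hcon; rw [hcon] at hpos; simp at hpos)
      have hzS := (hprops z hzmem).2.1
      have hSne : S.Nonempty := ⟨z.prod, hzS⟩
      obtain ⟨x, hxS, hxmax⟩ := exists_maxl S hSne
      have hc1 : 1 ≤ c := by
        rw [hc]
        exact Finset.card_pos.mpr ⟨x, Finset.mem_filter.mpr ⟨hxS, hxmax⟩⟩
      set B := S \ S.filter (IsMaxl S) with hB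
      have hBsub : B ⊆ S := Finset.sdiff_subset
      have hBcard : B.card + c = S.card := by
        rw [hB, Finset.card_sdiff_of_subset (Finset.filter_subset _ _)]
        have : c ≤ S.card := Finset.card_filter_le _ _
        omega
      have hBclosed : ∀ a ∈ B, ∀ b ∈ B, a * b ∈ B := by
        intro a ha b hb
        rw [hB, Finset.mem_sdiff, Finset.mem_filter] at ha hb ⊢
        refine ⟨hcl a ha.1 b hb.1, ?_⟩
        intro hcon
        -- if a*b is maximal then a is maximal, contradiction
        apply ha.2
        refine ⟨ha.1, ?_⟩
        intro y hy hay
        have h1 : JPre (a * b) a := ⟨1, b, by simp [mul_assoc]⟩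
        have h2 : JPre (a * b) y := jpre_trans h1 hay
        have h3 : JPre y (a * b) := hcon.2 y hy h2
        exact jpre_trans h3 h1
      have hdmem : ∀ x ∈ (blocks S w).map List.prod, x ∈ B := by
        intro x hx
        rw [List.mem_map] at hx
        obtain ⟨z', hz', rfl⟩ := hx
        rw [hB, Finset.mem_sdiff, Finset.mem_filter]
        have hp := hprops z' hz'
        exact ⟨hp.2.1, fun hcon => hp.2.2.1 hcon.2⟩
      have hdef := blocks_efree S hcl w hw hef
      have hBn : B.card ≤ n := by omega
      have hd := ih B hBn hBclosed ((blocks S w).map List.prod) hdmem hdef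
      rw [List.length_map] at hd
      -- w.length + 1 ≤ (#blocks + 1)(c+1) ≤ 4^B.card * 4^c = 4^S.card
      have hc4 : c + 1 ≤ 4 ^ c := by
        have := Nat.lt_pow_self (show 1 < 4 by omega) (n := c)
        omega
      calc w.length + 1 ≤ ((blocks S w).length + 1) * (c + 1) := hwlen
      _ ≤ 4 ^ B.card * 4 ^ c := Nat.mul_le_mul hd hc4
      _ = 4 ^ S.card := by rw [← pow_add, hBcard]

theorem exists_idem_factor (S : Finset M) (hcl : ∀ a ∈ S, ∀ b ∈ S, a * b ∈ S)
    (w : List M) (hw : ∀ x ∈ w, x ∈ S) (hlen : 4 ^ S.card ≤ w.length) :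
    ∃ l₁ l₂ l₃ : List M, w = l₁ ++ l₂ ++ l₃ ∧ l₂ ≠ [] ∧ l₂.prod * l₂.prod = l₂.prod := by
  by_contra hcon
  push_neg at hcon
  have hef : EFree w := by
    intro l₁ l₂ l₃ h hne heq
    exact hcon l₁ l₂ l₃ h hne heq
  have := efree_length S.card S le_rfl hcl w hw hef
  omega

end CombX

namespace PDSX

variable {Q Γ A : Type}

def FStep (P : PDS Q Γ A) (s t : Q × List Γ) : Prop :=
  P.StepAny (s.1, Sum.inl s.2) (t.1, Sum.inl t.2)

lemma fstep_iff (P : PDS Q Γ A) (p p' : Q) (σ σ' : List Γ) :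
    FStep P (p, σ) (p', σ') ↔
      ∃ X σ₀ a γ, σ = X :: σ₀ ∧ σ' = γ ++ σ₀ ∧ (p, X, a, p', γ) ∈ P.Δ := by
  constructor
  · rintro ⟨a, p₁, X, q₁, γ, sc, hmem, hs, ht⟩
    cases sc with
    | inl l =>
      simp only [SC.cons, SC.push, Prod.mk.injEq] at hs ht
      injection hs with hp hσ
      injection ht with hp' hσ'
      subst hp
      subst hp'
      have e1 := Sum.inl.inj hσ
      have e2 := Sum.inl.inj hσ'
      subst e1
      subst e2
      exact ⟨X, l, a, γ, rfl, rfl, hmem⟩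
    | inr s =>
      simp only [SC.cons, Prod.mk.injEq] at hs
      injection hs with _ h2
      cases h2
  · rintro ⟨X, σ₀, a, γ, rfl, rfl, hmem⟩
    exact ⟨a, p, X, p', γ, Sum.inl σ₀, hmem, rfl, rfl⟩

lemma stepany_inl {P : PDS Q Γ A} {p : Q} {σ : List Γ} {t : Q × SC Γ}
    (h : P.StepAny (p, Sum.inl σ) t) :
    ∃ p' σ', t = (p', Sum.inl σ') ∧ FStep P (p, σ) (p', σ') := by
  obtain ⟨a, p₁, X, q₁, γ, sc, hmem, hs, ht⟩ := h
  cases sc with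
  | inl l =>
    simp only [SC.cons, Prod.mk.injEq] at hs
    injection hs with hp hσ
    subst hp
    have e1 := Sum.inl.inj hσ
    subst e1
    refine ⟨q₁, γ ++ l, by simp only [SC.push] at ht; exact ht, ?_⟩
    rw [fstep_iff]
    exact ⟨X, l, a, γ, rfl, rfl, hmem⟩
  | inr s =>
    simp only [SC.cons, Prod.mk.injEq] at hs
    injection hs with _ h2
    cases h2

lemma no_step_empty {P : PDS Q Γ A} {qq : Q} {t : Q × SC Γ}
    (h : P.StepAny (qq, (Sum.inl [] : SC Γ)) t) : False := by
  obtain ⟨a, p₁, X, q₁, γ, sc, hmem, hs, _⟩ := h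
  cases sc with
  | inl l =>
    simp only [SC.cons, Prod.mk.injEq] at hs
    injection hs with _ h2
    exact absurd (Sum.inl.inj h2) (by simp)
  | inr s =>
    simp only [SC.cons, Prod.mk.injEq] at hs
    injection hs with _ h2
    cases h2

lemma reach_trace {P : PDS Q Γ A} {a b : Q} {α β : List Γ}
    (h : P.Reach (a, Sum.inl α) (b, Sum.inl β)) :
    ∃ (N : ℕ) (c : ℕ → Q × List Γ), c 0 = (a, α) ∧ c N = (b, β) ∧
      ∀ i, i < N → FStep P (c i) (c (i + 1)) := by
  have key : ∀ t : Q × SC Γ, P.Reach (a, Sum.inl α) t →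
      ∃ (b' : Q) (β' : List Γ) (N : ℕ) (c : ℕ → Q × List Γ),
        t = (b', Sum.inl β') ∧ c 0 = (a, α) ∧ c N = (b', β') ∧
        ∀ i, i < N → FStep P (c i) (c (i + 1)) := by
    intro t ht
    induction ht with
    | refl => exact ⟨a, α, 0, fun _ => (a, α), rfl, rfl, rfl, by omega⟩
    | tail hr hstep ih =>
      obtain ⟨b', β', N, c, rfl, hc0, hcN, hst⟩ := ih
      obtain ⟨p', σ', rfl, hf⟩ := stepany_inl hstep
      refine ⟨p', σ', N + 1, fun i => if i ≤ N then c i else (p', σ'), rfl, ?_, ?_, ?_⟩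
      · simpa using hc0
      · simp
      · intro i hi
        rcases Nat.lt_or_ge i N with hlt | hge
        · simpa [show i ≤ N by omega, show i + 1 ≤ N by omega] using hst i hlt
        · have : i = N := by omega
          subst this
          simpa [show ¬ (i + 1 ≤ i) by omega, hcN] using hf
  obtain ⟨b', β', N, c, heq, hc0, hcN, hst⟩ := key _ h
  obtain ⟨rfl, hβ⟩ : b' = b ∧ β' = β := by
    have h1 := congrArg Prod.fst heq
    have h2 := congrArg Prod.snd heq
    simp only at h1 h2
    exact ⟨h1.symm, (Sum.inl.inj h2).symm⟩
  subst hβ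
  exact ⟨N, c, hc0, hcN, hst⟩

lemma trace_reach {P : PDS Q Γ A} {N : ℕ} {c : ℕ → Q × List Γ}
    (hstep : ∀ t, t < N → FStep P (c t) (c (t + 1))) :
    ∀ i j, i ≤ j → j ≤ N →
      P.Reach ((c i).1, Sum.inl (c i).2) ((c j).1, Sum.inl (c j).2) := by
  intro i j
  induction j with
  | zero =>
    intro hij _
    have : i = 0 := by omega
    subst this
    exact Relation.ReflTransGen.refl
  | succ j ih =>
    intro hij hjN
    rcases Nat.eq_or_lt_of_le hij with heq | hlt
    · subst heq
      exact Relation.ReflTransGen.refl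
    · exact Relation.ReflTransGen.tail (ih (by omega) (by omega)) (hstep j (by omega))

lemma retarget {P : PDS Q Γ A} {N : ℕ} {c : ℕ → Q × List Γ}
    (hstep : ∀ t, t < N → FStep P (c t) (c (t + 1))) (τ : List Γ) :
    ∀ i j, i ≤ j → j ≤ N →
    (∀ t, i ≤ t → t ≤ j → τ.length + 1 ≤ (c t).2.length) →
    ∀ σi, (c i).2 = σi ++ τ →
    ∃ σj, (c j).2 = σj ++ τ ∧
      ∀ τ' : List Γ, P.Reach ((c i).1, Sum.inl (σi ++ τ')) ((c j).1, Sum.inl (σj ++ τ')) := by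
  intro i j
  induction j with
  | zero =>
    intro hij _ _ σi hσ
    have : i = 0 := by omega
    subst this
    exact ⟨σi, hσ, fun τ' => Relation.ReflTransGen.refl⟩
  | succ j ih =>
    intro hij hjN hlev σi hσ
    rcases Nat.eq_or_lt_of_le hij with heq | hlt
    · subst heq
      exact ⟨σi, hσ, fun τ' => Relation.ReflTransGen.refl⟩
    · obtain ⟨σj, hσj, hre⟩ := ih (by omega) (by omega)
        (fun t h1 h2 => hlev t h1 (by omega)) σi hσ
      have hs : FStep P ((c j).1, (c j).2) ((c (j + 1)).1, (c (j + 1)).2) := by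
        simpa using hstep j (by omega)
      rw [fstep_iff] at hs
      obtain ⟨X, σ₀, a, γ, h1, h2, hmem⟩ := hs
      have hlevj := hlev j (by omega) (by omega)
      obtain ⟨Y, σj0, rfl⟩ : ∃ Y σ', σj = Y :: σ' := by
        cases σj with
        | nil =>
          rw [List.nil_append] at hσj
          rw [hσj] at hlevj
          omega
        | cons Y σ' => exact ⟨Y, σ', rfl⟩
      have hXY : X :: σ₀ = Y :: (σj0 ++ τ) := by
        rw [← h1, hσj]
        simp
      injection hXY with hX hrest
      subst hX
      subst hrest
      refine ⟨γ ++ σj0, by rw [h2]; simp [List.append_assoc], ?_⟩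
      intro τ'
      refine Relation.ReflTransGen.tail (hre τ') ?_
      have hstep' : FStep P ((c j).1, X :: (σj0 ++ τ')) ((c (j + 1)).1, γ ++ (σj0 ++ τ')) :=
        (fstep_iff P _ _ _ _).mpr ⟨X, σj0 ++ τ', a, γ, rfl, rfl, hmem⟩
      simpa [List.append_assoc, FStep] using hstep'

lemma reach_append {P : PDS Q Γ A} {a b : Q} {σ σ' : List Γ}
    (h : P.Reach (a, Sum.inl σ) (b, Sum.inl σ')) (τ : List Γ) :
    P.Reach (a, Sum.inl (σ ++ τ)) (b, Sum.inl (σ' ++ τ)) := by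
  obtain ⟨N, c, hc0, hcN, hstep⟩ := reach_trace h
  have key : ∀ j, j ≤ N → P.Reach (a, Sum.inl (σ ++ τ)) ((c j).1, Sum.inl ((c j).2 ++ τ)) := by
    intro j
    induction j with
    | zero =>
      intro _
      rw [hc0]
      exact Relation.ReflTransGen.refl
    | succ j ih =>
      intro hj
      refine Relation.ReflTransGen.tail (ih (by omega)) ?_
      have hs : FStep P ((c j).1, (c j).2) ((c (j + 1)).1, (c (j + 1)).2) := by
        simpa using hstep j (by omega)
      rw [fstep_iff] at hs
      obtain ⟨X, σ₀, aa, γ, h1, h2, hmem⟩ := hs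
      rw [h1, h2]
      have hstep' : FStep P ((c j).1, X :: (σ₀ ++ τ)) ((c (j + 1)).1, γ ++ (σ₀ ++ τ)) :=
        (fstep_iff P _ _ _ _).mpr ⟨X, σ₀ ++ τ, aa, γ, rfl, rfl, hmem⟩
      simpa [List.append_assoc, FStep] using hstep'
  have hfin := key N le_rfl
  rw [hcN] at hfin
  exact hfin

lemma eats_nil (P : PDS Q Γ A) : P.eats [] = id := by
  funext T
  ext r
  simp only [PDS.eats, Set.mem_setOf_eq, id_eq]
  constructor
  · rintro ⟨qq, hq, hreach⟩
    rcases (Relation.ReflTransGen.cases_head hreach) with heq | ⟨mid, hstep, _⟩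
    · obtain ⟨h1, _⟩ := Prod.mk.injEq .. ▸ heq
      have := congrArg Prod.fst heq
      simp at this
      subst this
      exact hq
    · exact absurd hstep (by intro hc; exact no_step_empty hc)
  · intro hr
    exact ⟨r, hr, Relation.ReflTransGen.refl⟩

end PDSX

namespace PDSX

variable {Q Γ A : Type}

lemma eats_append (P : PDS Q Γ A) (x y : List Γ) :
    P.eats (x ++ y) = fun T => P.eats y (P.eats x T) := by
  funext T
  ext r
  constructor
  · rintro ⟨qq, hqT, hreach⟩
    obtain ⟨N, c, hc0, hcN, hstep⟩ := reach_trace hreach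
    have hFne : ((Finset.range (N + 1)).filter (fun i => (c i).2.length ≤ y.length)).Nonempty :=
      ⟨N, by simp [hcN]⟩
    obtain ⟨j₀, hj₀mem, hj₀min⟩ :
        ∃ j₀ ∈ (Finset.range (N + 1)).filter (fun i => (c i).2.length ≤ y.length),
          ∀ t ∈ (Finset.range (N + 1)).filter (fun i => (c i).2.length ≤ y.length), j₀ ≤ t :=
      ⟨_, Finset.min'_mem _ hFne, fun t ht => Finset.min'_le _ t ht⟩
    rw [Finset.mem_filter, Finset.mem_range] at hj₀mem
    have hmin : ∀ t, t < j₀ → t ≤ N → y.length + 1 ≤ (c t).2.length := by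
      intro t ht htN
      by_contra hcon
      push_neg at hcon
      have htF : t ∈ (Finset.range (N + 1)).filter (fun i => (c i).2.length ≤ y.length) := by
        rw [Finset.mem_filter, Finset.mem_range]
        exact ⟨by omega, by omega⟩
      have := hj₀min t htF
      omega
    rcases Nat.eq_zero_or_pos j₀ with hz | hpos
    · -- x must be empty
      have h0 : (c 0).2.length ≤ y.length := by
        have := hj₀mem.2
        rw [hz] at this
        exact this
      rw [hc0] at h0
      simp only [List.length_append] at h0
      have hx : x = [] := List.eq_nil_of_length_eq_zero (by omega)
      subst hx
      exact ⟨qq, ⟨qq, hqT, Relation.ReflTransGen.refl⟩, by simpa using hreach⟩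
    · obtain ⟨t₀, ht₀⟩ : ∃ t₀, j₀ = t₀ + 1 := ⟨j₀ - 1, by omega⟩
      have ht₀N : t₀ ≤ N := by omega
      have hret := retarget hstep y 0 t₀ (by omega) ht₀N
        (fun t h1 h2 => hmin t (by omega) (by omega)) x (by rw [hc0])
      obtain ⟨σ, hσ, hre⟩ := hret
      have hreQ : P.Reach (qq, Sum.inl x) ((c t₀).1, Sum.inl σ) := by
        have := hre []
        rw [hc0] at this
        simpa using this
      have hs : FStep P ((c t₀).1, (c t₀).2) ((c (t₀ + 1)).1, (c (t₀ + 1)).2) := by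
        simpa using hstep t₀ (by omega)
      rw [fstep_iff] at hs
      obtain ⟨X, σ₀, a, γ, h1, h2, hmem⟩ := hs
      have hlevt₀ : y.length + 1 ≤ (c t₀).2.length := hmin t₀ (by omega) ht₀N
      obtain ⟨Y, σ', rfl⟩ : ∃ Y σ', σ = Y :: σ' := by
        cases σ with
        | nil =>
          rw [List.nil_append] at hσ
          rw [hσ] at hlevt₀
          omega
        | cons Y σ' => exact ⟨Y, σ', rfl⟩
      have hXY : X :: σ₀ = Y :: (σ' ++ y) := by
        rw [← h1, hσ]
        simp
      injection hXY with hX hrest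
      subst hX
      subst hrest
      -- length of (c j₀).2 ≤ y.length forces γ = [] and σ' = []
      have hlj₀ : (c j₀).2.length ≤ y.length := hj₀mem.2
      rw [ht₀] at hlj₀
      rw [h2] at hlj₀
      simp at hlj₀
      have hγ : γ = [] := List.eq_nil_of_length_eq_zero (by omega)
      have hσ' : σ' = [] := List.eq_nil_of_length_eq_zero (by omega)
      subst hγ
      subst hσ'
      have hcy : (c (t₀ + 1)).2 = y := by rw [h2]; simp
      have hstripped : FStep P ((c t₀).1, [X]) ((c (t₀ + 1)).1, []) :=
        (fstep_iff P _ _ _ _).mpr ⟨X, [], a, [], rfl, rfl, hmem⟩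
      have hmid : P.Reach (qq, Sum.inl x) ((c (t₀ + 1)).1, Sum.inl []) := by
        refine Relation.ReflTransGen.tail hreQ ?_
        simpa [FStep] using hstripped
      have htail : P.Reach ((c (t₀ + 1)).1, Sum.inl y) (r, Sum.inl []) := by
        have := trace_reach hstep (t₀ + 1) N (by omega) le_rfl
        rw [hcy, hcN] at this
        exact this
      exact ⟨(c (t₀ + 1)).1, ⟨qq, hqT, hmid⟩, htail⟩
  · rintro ⟨mid, ⟨qq, hqT, h1⟩, h2⟩
    refine ⟨qq, hqT, ?_⟩
    have ha := reach_append h1 y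
    simp at ha
    exact ha.trans h2

lemma eats_up (P : PDS Q Γ A) (l : List Γ) (T : Set Q) :
    P.eats l T = ⋃ q ∈ T, P.eats l {q} := by
  ext r
  simp only [PDS.eats, Set.mem_setOf_eq, Set.mem_iUnion, Set.mem_singleton_iff]
  constructor
  · rintro ⟨qq, hq, hr⟩
    exact ⟨qq, hq, qq, rfl, hr⟩
  · rintro ⟨qq, hq, q', rfl, hr⟩
    exact ⟨q', hq, hr⟩

end PDSX

namespace PDSX

variable {Q Γ A : Type}

abbrev EM (Q : Type) := (Function.End (Set Q))ᵐᵒᵖ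

noncomputable instance instFintypeEnd (Q : Type) [Fintype Q] : Fintype (Function.End (Set Q)) := by
  classical
  exact inferInstanceAs (Fintype (Set Q → Set Q))

noncomputable instance instFintypeEM (Q : Type) [Fintype Q] : Fintype (EM Q) := by
  classical
  exact Fintype.ofEquiv (Function.End (Set Q)) MulOpposite.opEquiv

noncomputable def eatsM (P : PDS Q Γ A) (l : List Γ) : EM Q :=
  MulOpposite.op (P.eats l : Function.End (Set Q))

lemma eatsM_inj {P : PDS Q Γ A} {l l' : List Γ} (h : eatsM P l = eatsM P l') :
    P.eats l = P.eats l' := by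
  unfold eatsM at h
  exact MulOpposite.op_injective h

lemma eatsM_nil (P : PDS Q Γ A) : eatsM P ([] : List Γ) = 1 := by
  unfold eatsM
  rw [eats_nil]
  rfl

lemma eatsM_append (P : PDS Q Γ A) (x y : List Γ) :
    eatsM P (x ++ y) = eatsM P x * eatsM P y := by
  unfold eatsM
  rw [eats_append]
  rfl

def IsUP {Q : Type} (f : Set Q → Set Q) : Prop := ∀ T : Set Q, f T = ⋃ q ∈ T, f {q}

lemma isUP_eats (P : PDS Q Γ A) (l : List Γ) : IsUP (P.eats l) := fun T => eats_up P l T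

lemma isUP_comp {f g : Set Q → Set Q} (hf : IsUP f) (hg : IsUP g) :
    IsUP (fun T => g (f T)) := by
  intro T
  calc g (f T) = ⋃ x ∈ f T, g {x} := hg (f T)
  _ = ⋃ q ∈ T, g (f {q}) := by
      ext r
      constructor
      · intro hr
        rw [Set.mem_iUnion₂] at hr
        obtain ⟨x, hx, hrx⟩ := hr
        rw [hf T, Set.mem_iUnion₂] at hx
        obtain ⟨qq, hq, hxq⟩ := hx
        rw [Set.mem_iUnion₂]
        refine ⟨qq, hq, ?_⟩
        rw [hg (f {qq}), Set.mem_iUnion₂]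
        exact ⟨x, hxq, hrx⟩
      · intro hr
        rw [Set.mem_iUnion₂] at hr
        obtain ⟨qq, hq, hrq⟩ := hr
        rw [hg (f {qq}), Set.mem_iUnion₂] at hrq
        obtain ⟨x, hxq, hrx⟩ := hrq
        rw [Set.mem_iUnion₂]
        refine ⟨x, ?_, hrx⟩
        rw [hf T, Set.mem_iUnion₂]
        exact ⟨qq, hq, hxq⟩

noncomputable def UPS (Q : Type) [Fintype Q] : Finset (EM Q) := by
  classical
  exact Finset.univ.filter (fun m : EM Q => IsUP m.unop)

lemma mem_UPS {Q : Type} [Fintype Q] (m : EM Q) : m ∈ UPS Q ↔ IsUP m.unop := by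
  classical
  unfold UPS
  simp only [Finset.mem_filter, Finset.mem_univ, true_and]

lemma eatsM_mem_UPS [Fintype Q] (P : PDS Q Γ A) (l : List Γ) : eatsM P l ∈ UPS Q :=
  (mem_UPS _).mpr (isUP_eats P l)

lemma UPS_closed {Q : Type} [Fintype Q] :
    ∀ a ∈ UPS Q, ∀ b ∈ UPS Q, a * b ∈ UPS Q := by
  intro a ha b hb
  rw [mem_UPS] at ha hb ⊢
  rw [MulOpposite.unop_mul]
  exact isUP_comp (f := a.unop) (g := b.unop) ha hb

lemma UPS_card {Q : Type} [Fintype Q] : (UPS Q).card ≤ 2 ^ (Fintype.card Q ^ 2) := by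
  classical
  have h1 : (UPS Q).card ≤ Fintype.card (Q → Set Q) := by
    have := Finset.card_le_card_of_injOn (f := fun m : EM Q => (fun q : Q => m.unop {q}))
      (s := UPS Q) (t := Finset.univ) (fun m _ => Finset.mem_univ _) ?_
    · simpa using this
    · intro m₁ h₁ m₂ h₂ heq
      rw [Finset.mem_coe, mem_UPS] at h₁ h₂
      have : m₁.unop = m₂.unop := by
        funext T
        rw [h₁ T, h₂ T]
        ext r
        simp only [Set.mem_iUnion₂]
        constructor
        · rintro ⟨qq, hq, hr⟩
          refine ⟨qq, hq, ?_⟩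
          have hq2 : m₁.unop {qq} = m₂.unop {qq} := congrFun heq qq
          rwa [← hq2]
        · rintro ⟨qq, hq, hr⟩
          refine ⟨qq, hq, ?_⟩
          have hq2 : m₁.unop {qq} = m₂.unop {qq} := congrFun heq qq
          rwa [hq2]
      exact MulOpposite.unop_injective this
  have h2 : Fintype.card (Q → Set Q) = 2 ^ (Fintype.card Q ^ 2) := by
    rw [Fintype.card_fun, Fintype.card_set, ← pow_mul, sq]
  omega

lemma drop_take_append {α : Type} (m : List α) {i j : ℕ} (hij : i ≤ j) (hjm : j ≤ m.length) :
    (m.take j).drop i ++ m.drop j = m.drop i := by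
  conv_rhs => rw [← List.take_append_drop j m, List.drop_append]
  have hz : i - (m.take j).length = 0 := by
    rw [List.length_take]
    omega
  rw [hz, List.drop_zero]

lemma take_seg {α : Type} (l : List α) {i j : ℕ} (hij : i ≤ j) :
    l.take i ++ (l.take j).drop i = l.take j := by
  conv_rhs => rw [← List.take_append_drop i (l.take j), List.take_take, min_eq_left hij]

lemma seg_concat {α : Type} (l : List α) {i j k : ℕ} (hij : i ≤ j) (hjk : j ≤ k)
    (hk : k ≤ l.length) :
    (l.take j).drop i ++ (l.take k).drop j = (l.take k).drop i := by
  have h1 : (l.take k).take j = l.take j := by rw [List.take_take, min_eq_left hjk]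
  rw [← h1]
  exact drop_take_append (l.take k) hij (by rw [List.length_take]; omega)

end PDSX

namespace PDSX

variable {Q Γ A : Type}

lemma pump_pair {P : PDS Q Γ A} (hpp : P.PushPop) {q₀ q : Q} {α₀ δ : List Γ}
    (hreach : P.Reach (q₀, Sum.inl α₀) (q, Sum.inl δ)) :
    ∃ (st : ℕ → Q) (hd : ℕ → Option Γ),
      ∀ j₁ j₂ : ℕ, 1 ≤ j₁ → j₁ < j₂ → j₂ + α₀.length ≤ δ.length →
        st j₁ = st j₂ → hd j₁ = hd j₂ →
        ∀ i : ℕ, P.Reach (q₀, Sum.inl α₀)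
          (q, Sum.inl (δ.take j₁ ++ listPow ((δ.take j₂).drop j₁) i ++ δ.drop j₂)) := by
  classical
  obtain ⟨N, c, hc0, hcN, hstep⟩ := reach_trace hreach
  set n := δ.length with hn
  have hstep_len : ∀ t, t < N → (c (t + 1)).2.length ≤ (c t).2.length + 1 := by
    intro t ht
    have hs : FStep P ((c t).1, (c t).2) ((c (t + 1)).1, (c (t + 1)).2) := by
      simpa using hstep t ht
    rw [fstep_iff] at hs
    obtain ⟨X, σ₀, a, γ, h1, h2, hmem⟩ := hs
    have hγ : γ.length ≤ 2 := hpp _ hmem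
    rw [h1, h2]
    simp only [List.length_append, List.length_cons]
    omega
  set tk : ℕ → ℕ :=
    fun k => ((Finset.range (N + 1)).filter (fun i => (c i).2.length ≤ k)).sup id with htk
  have tk_facts : ∀ k, α₀.length ≤ k → k ≤ n →
      tk k ≤ N ∧ (c (tk k)).2.length = k ∧ ∀ i, i ≤ N → tk k < i → k < (c i).2.length := by
    intro k hk1 hk2
    have hne : ((Finset.range (N + 1)).filter (fun i => (c i).2.length ≤ k)).Nonempty := by
      refine ⟨0, ?_⟩
      rw [Finset.mem_filter, Finset.mem_range]
      refine ⟨by omega, ?_⟩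
      rw [hc0]
      exact hk1
    obtain ⟨m, hm, hmeq⟩ := Finset.exists_mem_eq_sup _ hne id
    rw [Finset.mem_filter, Finset.mem_range] at hm
    have htkm : tk k = m := hmeq
    have htkN : tk k ≤ N := by omega
    have htklvle : (c (tk k)).2.length ≤ k := by rw [htkm]; exact hm.2
    have hmax : ∀ i, i ≤ N → tk k < i → k < (c i).2.length := by
      intro i hiN hi
      by_contra hcon
      push_neg at hcon
      have hiF : i ∈ (Finset.range (N + 1)).filter (fun i => (c i).2.length ≤ k) := by
        rw [Finset.mem_filter, Finset.mem_range]
        exact ⟨by omega, hcon⟩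
      have hle : id i ≤ tk k := by
        rw [htk]
        exact Finset.le_sup hiF
      simp only [id_eq] at hle
      omega
    refine ⟨htkN, ?_, hmax⟩
    rcases Nat.lt_or_ge (tk k) N with hlt | hge
    · have h1 := hmax (tk k + 1) (by omega) (by omega)
      have h2 := hstep_len (tk k) hlt
      omega
    · have heqN : tk k = N := by omega
      have hlvN : (c N).2.length = n := by rw [hcN]
      rw [heqN]
      rw [heqN] at htklvle
      omega
  have tk_mono : ∀ k k', k ≤ k' → tk k ≤ tk k' := by
    intro k k' hkk
    rw [htk]
    apply Finset.sup_mono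
    intro i hi
    rw [Finset.mem_filter] at hi ⊢
    exact ⟨hi.1, le_trans hi.2 hkk⟩
  refine ⟨fun j => (c (tk (n - j + 1))).1, fun j => (c (tk (n - j + 1))).2.head?, ?_⟩
  intro j₁ j₂ hj1 hj12 hj2 hstq hhd i
  simp only at hstq hhd
  have hj2n : j₂ ≤ n := by omega
  set k₁ := n - j₂ + 1 with hk₁
  set k₂ := n - j₁ + 1 with hk₂
  have hk₁₂ : k₁ < k₂ := by omega
  obtain ⟨ht₁N, hlv₁, hmax₁⟩ := tk_facts k₁ (by omega) (by omega)
  obtain ⟨ht₂N, hlv₂, hmax₂⟩ := tk_facts k₂ (by omega) (by omega)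
  set t₁ := tk k₁ with ht₁
  set t₂ := tk k₂ with ht₂
  have ht₁₂ : t₁ ≤ t₂ := tk_mono k₁ k₂ (by omega)
  obtain ⟨X₁, r₁, hst₁⟩ : ∃ X r, (c t₁).2 = X :: r := by
    cases hcs : (c t₁).2 with
    | nil => rw [hcs] at hlv₁; simp at hlv₁
    | cons a l => exact ⟨a, l, rfl⟩
  obtain ⟨X₂, r₂, hst₂⟩ : ∃ X r, (c t₂).2 = X :: r := by
    cases hcs : (c t₂).2 with
    | nil => rw [hcs] at hlv₂; simp at hlv₂
    | cons a l => exact ⟨a, l, rfl⟩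
  have hr₁len : r₁.length = k₁ - 1 := by
    rw [hst₁] at hlv₁
    simp at hlv₁
    omega
  have hr₂len : r₂.length = k₂ - 1 := by
    rw [hst₂] at hlv₂
    simp at hlv₂
    omega
  -- strip the run [t₂, N] above level k₂
  have hlev2 : ∀ t, t₂ ≤ t → t ≤ N → r₂.length + 1 ≤ (c t).2.length := by
    intro t hta htb
    rcases Nat.eq_or_lt_of_le hta with rfl | hlt
    · omega
    · have := hmax₂ t htb hlt
      omega
  obtain ⟨σN, hσN, hreC⟩ := retarget hstep r₂ t₂ N ht₂N le_rfl hlev2 [X₂] (by rw [hst₂]; rfl)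
  have hδN : (c N).2 = δ := by rw [hcN]
  have hδsplit : δ = σN ++ r₂ := by rw [← hδN, hσN]
  have hσNlen : σN.length = j₁ := by
    have hh := congrArg List.length hδsplit
    simp only [List.length_append] at hh
    omega
  have hσNtake : σN = δ.take j₁ := by
    rw [hδsplit, ← hσNlen, List.take_left]
  have hr₂drop : r₂ = δ.drop j₁ := by
    rw [hδsplit, ← hσNlen, List.drop_left]
  -- strip the run [t₁, N] above level k₁ (to identify r₁)
  have hlev1 : ∀ t, t₁ ≤ t → t ≤ N → r₁.length + 1 ≤ (c t).2.length := by
    intro t hta htb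
    rcases Nat.eq_or_lt_of_le hta with rfl | hlt
    · omega
    · have := hmax₁ t htb hlt
      omega
  obtain ⟨σN', hσN', _⟩ := retarget hstep r₁ t₁ N ht₁N le_rfl hlev1 [X₁] (by rw [hst₁]; rfl)
  have hδsplit' : δ = σN' ++ r₁ := by rw [← hδN, hσN']
  have hσN'len : σN'.length = j₂ := by
    have hh := congrArg List.length hδsplit'
    simp only [List.length_append] at hh
    omega
  have hr₁drop : r₁ = δ.drop j₂ := by
    rw [hδsplit', ← hσN'len, List.drop_left]
  -- strip the run [t₁, t₂] above level k₁
  have hlevB : ∀ t, t₁ ≤ t → t ≤ t₂ → r₁.length + 1 ≤ (c t).2.length := by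
    intro t hta htb
    exact hlev1 t hta (by omega)
  obtain ⟨σm, hσm, hreB⟩ := retarget hstep r₁ t₁ t₂ ht₁₂ ht₂N hlevB [X₁] (by rw [hst₁]; rfl)
  set β := (δ.take j₂).drop j₁ with hβ
  have hsplit2 : δ.drop j₁ = β ++ δ.drop j₂ :=
    (drop_take_append δ (le_of_lt hj12) hj2n).symm
  have hσmeq : σm = X₂ :: β := by
    have h1 : σm ++ r₁ = (X₂ :: β) ++ r₁ := by
      rw [← hσm, hst₂, hr₂drop, hsplit2, hr₁drop]
      simp
    exact List.append_cancel_right h1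
  -- heads and states coincide
  have hX₁₂ : X₂ = X₁ := by
    rw [hst₁, hst₂] at hhd
    simp at hhd
    exact hhd
  have hp₁₂ : (c t₂).1 = (c t₁).1 := by
    exact hstq
  -- the pump
  have hD : P.Reach (q₀, Sum.inl α₀) ((c t₁).1, Sum.inl (X₁ :: r₁)) := by
    have h := trace_reach hstep 0 t₁ (Nat.zero_le _) ht₁N
    rw [hc0, hst₁] at h
    exact h
  have hpump : ∀ m : ℕ,
      P.Reach (q₀, Sum.inl α₀) ((c t₁).1, Sum.inl (X₁ :: (listPow β m ++ r₁))) := by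
    intro m
    induction m with
    | zero => simpa [listPow] using hD
    | succ m ih =>
      refine ih.trans ?_
      have hB := hreB (listPow β m ++ r₁)
      rw [hσmeq, hX₁₂, hp₁₂] at hB
      have he1 : [X₁] ++ (listPow β m ++ r₁) = X₁ :: (listPow β m ++ r₁) := rfl
      have he2 : (X₁ :: β) ++ (listPow β m ++ r₁) = X₁ :: (listPow β (m + 1) ++ r₁) := by
        simp [listPow, List.append_assoc]
    
      rw [he1, he2] at hB
      exact hB
  have hC := hreC (listPow β i ++ r₁)
  rw [hX₁₂, hp₁₂] at hC
  have hfin := (hpump i).trans hC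
  rw [hcN] at hfin
  have hfinal : σN ++ (listPow β i ++ r₁) = δ.take j₁ ++ listPow β i ++ δ.drop j₂ := by
    rw [hσNtake, hr₁drop]
    simp [List.append_assoc]
  rw [hfinal] at hfin
  exact hfin

end PDSX

/-- With `F = 2^(9·2^(|Q|²)) · |P|²`: every configuration `qδ` reachable from `q₀α₀`
with `|δ| ≥ F + |α₀|` can be written as `qδ = qαβγ` where `(α, β)` is a linked pair,
`|α|, |β| ≤ F`, and every `qαβ^iγ` is reachable from `q₀α₀`. -/
theorem stmt_7 (Q Γ A : Type) [Fintype Q] [Fintype Γ] [Fintype A]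
    (P : PDS Q Γ A) (hpp : P.PushPop) (q₀ q : Q) (α₀ δ : List Γ)
    (hreach : P.Reach (q₀, Sum.inl α₀) (q, Sum.inl δ))
    (hlen : δ.length ≥ 2 ^ (9 * 2 ^ (Fintype.card Q ^ 2)) * P.size ^ 2 + α₀.length) :
    ∃ α β γ : List Γ, δ = α ++ β ++ γ ∧ P.LinkedPair α β ∧
      α.length ≤ 2 ^ (9 * 2 ^ (Fintype.card Q ^ 2)) * P.size ^ 2 ∧
      β.length ≤ 2 ^ (9 * 2 ^ (Fintype.card Q ^ 2)) * P.size ^ 2 ∧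
      ∀ i : ℕ, P.Reach (q₀, Sum.inl α₀) (q, Sum.inl (α ++ listPow β i ++ γ)) := by
  classical
  obtain ⟨st, hd, hpump⟩ := PDSX.pump_pair hpp hreach
  set n := δ.length with hn
  set m' := 2 ^ (Fintype.card Q ^ 2) with hm'
  set F := 2 ^ (9 * m') * P.size ^ 2 with hF
  have hQ1 : 1 ≤ Fintype.card Q := Fintype.card_pos_iff.mpr ⟨q⟩
  have hsz : P.size = Fintype.card Q + Fintype.card Γ + Fintype.card A + P.Δ.card := rfl
  have hsize1 : 1 ≤ P.size := by omega
  have hm'1 : 1 ≤ m' := Nat.one_le_pow _ _ (by omega)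
  have hF1 : 1 ≤ F := by
    have h1 : 1 ≤ (2:ℕ) ^ (9 * m') := Nat.one_le_pow _ _ (by omega)
    have h2 : 1 ≤ P.size ^ 2 := Nat.one_le_pow _ _ (by omega)
    calc 1 = 1 * 1 := by omega
    _ ≤ 2 ^ (9 * m') * P.size ^ 2 := Nat.mul_le_mul h1 h2
  have hFn : F ≤ n := by omega
  set S := PDSX.UPS Q with hS
  set s := S.card with hs'
  have hcardS : s ≤ m' := by
    rw [hs', hS, hm']
    exact PDSX.UPS_card
  -- pigeonhole
  have hmaps : ∀ j ∈ Finset.Icc 1 F,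
      (st j, hd j, PDSX.eatsM P (δ.take j)) ∈
        (Finset.univ : Finset Q) ×ˢ (Finset.univ : Finset (Option Γ)) ×ˢ S := by
    intro j _
    simp only [Finset.mem_product, Finset.mem_univ, true_and]
    exact PDSX.eatsM_mem_UPS P _
  have hcount : ((Finset.univ : Finset Q) ×ˢ (Finset.univ : Finset (Option Γ)) ×ˢ S).card
      * 4 ^ s < (Finset.Icc 1 F).card := by
    rw [Finset.card_product, Finset.card_product, Nat.card_Icc]
    simp only [Finset.card_univ, Fintype.card_option]
    have e1 : F + 1 - 1 = F := by omega
    rw [e1]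
    have h1 : s * 4 ^ s ≤ 2 ^ m' * 4 ^ m' :=
      Nat.mul_le_mul (le_trans (le_of_lt (Nat.lt_two_pow_self (n := s))) (Nat.pow_le_pow_right (by omega) hcardS))
        (Nat.pow_le_pow_right (by omega) hcardS)
    have h2 : (2:ℕ) ^ m' * 4 ^ m' = 2 ^ (3 * m') := by
      rw [show (4:ℕ) = 2 ^ 2 by norm_num, ← pow_mul, ← pow_add]
      ring_nf
    have h3 : (2:ℕ) ^ (3 * m') < 2 ^ (9 * m') := by
      apply Nat.pow_lt_pow_right (by omega)
      omega
    have h4 : s * 4 ^ s < 2 ^ (9 * m') := by omega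
    calc Fintype.card Q * ((Fintype.card Γ + 1) * S.card) * 4 ^ s
        = (Fintype.card Q * (Fintype.card Γ + 1)) * (s * 4 ^ s) := by rw [← hs']; ring
      _ ≤ (P.size * P.size) * (s * 4 ^ s) :=
          Nat.mul_le_mul (Nat.mul_le_mul (by omega) (by omega)) le_rfl
      _ < (P.size * P.size) * 2 ^ (9 * m') := by
          have hp : 0 < P.size * P.size := by positivity
          exact (Nat.mul_lt_mul_left hp).mpr h4
      _ = F := by rw [hF]; ring
  obtain ⟨y, hyt, hycard⟩ := Finset.exists_lt_card_fiber_of_mul_lt_card_of_maps_to hmaps hcount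
  set Af := Finset.filter (fun x => (st x, hd x, PDSX.eatsM P (δ.take x)) = y) (Finset.Icc 1 F)
    with hAf
  have hycard' : 4 ^ s < Af.card := hycard
  set t := Af.card - 1 with htdef
  have h41 : 1 ≤ 4 ^ s := Nat.one_le_pow _ _ (by omega)
  have hAcard : Af.card = t + 1 := by omega
  have ht4 : 4 ^ s ≤ t := by omega
  set g := Af.orderIsoOfFin hAcard with hg
  set J : ℕ → ℕ := fun u => if h : u < t + 1 then (g ⟨u, h⟩ : ℕ) else 0 with hJ
  have hJmem : ∀ u, u ≤ t → J u ∈ Af := by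
    intro u hu
    rw [hJ]
    simp only [dif_pos (show u < t + 1 by omega)]
    exact (g ⟨u, _⟩).2
  have hJmono : ∀ u v, u < v → v ≤ t → J u < J v := by
    intro u v huv hv
    rw [hJ]
    simp only [dif_pos (show u < t + 1 by omega), dif_pos (show v < t + 1 by omega)]
    exact Subtype.coe_lt_coe.mpr (g.strictMono (Fin.mk_lt_mk.mpr huv))
  have hJle : ∀ u v, u ≤ v → v ≤ t → J u ≤ J v := by
    intro u v huv hv
    rcases Nat.eq_or_lt_of_le huv with rfl | hlt
    · exact le_rfl
    · exact le_of_lt (hJmono u v hlt hv)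
  have hAfact : ∀ u, u ≤ t →
      1 ≤ J u ∧ J u ≤ F ∧ (st (J u), hd (J u), PDSX.eatsM P (δ.take (J u))) = y := by
    intro u hu
    have h := hJmem u hu
    rw [hAf, Finset.mem_filter, Finset.mem_Icc] at h
    exact ⟨h.1.1, h.1.2, h.2⟩
  have hJn : ∀ u, u ≤ t → J u ≤ n := fun u hu => le_trans (hAfact u hu).2.1 hFn
  -- contracted word over range'
  set ef : ℕ → PDSX.EM Q := fun u => PDSX.eatsM P ((δ.take (J (u + 1))).drop (J u)) with hef
  set cw := (List.range' 0 t).map ef with hcw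
  have hcwlen : cw.length = t := by
    rw [hcw, List.length_map, List.length_range']
  have hcwmem : ∀ x ∈ cw, x ∈ S := by
    intro x hx
    rw [hcw, List.mem_map] at hx
    obtain ⟨u, _, rfl⟩ := hx
    rw [hef]
    exact PDSX.eatsM_mem_UPS P _
  obtain ⟨l₁, l₂, l₃, hsplit, hl₂ne, hidem⟩ :=
    CombX.exists_idem_factor S PDSX.UPS_closed cw hcwmem
      (by rw [hcwlen, ← hs']; exact ht4)
  have key : ∀ v u, u + v ≤ t →
      ((List.range' u v).map ef).prod = PDSX.eatsM P ((δ.take (J (u + v))).drop (J u)) := by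
    intro v
    induction v with
    | zero =>
      intro u hu
      simp only [List.range'_zero, List.map_nil, List.prod_nil, Nat.add_zero]
      have hnil : (δ.take (J u)).drop (J u) = [] := by
        apply List.drop_eq_nil_of_le
        rw [List.length_take]
        exact Nat.min_le_left _ _
      rw [hnil, PDSX.eatsM_nil]
    | succ v ih =>
      intro u hu
      rw [List.range'_succ, List.map_cons, List.prod_cons, ih (u + 1) (by omega), hef]
      simp only
      rw [← PDSX.eatsM_append]
      have harith : u + 1 + v = u + (v + 1) := by omega
      rw [PDSX.seg_concat δ (hJle u (u + 1) (by omega) (by omega))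
        (hJle (u + 1) (u + 1 + v) (by omega) (by omega))
        (by rw [harith]; exact hJn _ (by omega)), harith]
  set a := l₁.length with ha
  have hlensum : t = l₁.length + l₂.length + l₃.length := by
    have hh := congrArg List.length hsplit
    rw [hcwlen] at hh
    simp only [List.length_append] at hh
    omega
  set b := l₁.length + l₂.length with hb
  have hble : b ≤ t := by omega
  have hab : a < b := by
    have : l₂.length ≠ 0 := fun hc => hl₂ne (List.eq_nil_of_length_eq_zero hc)
    omega
  -- identify the middle of the range'
  have hsplit' : (List.range' 0 t).map ef = l₁ ++ (l₂ ++ l₃) := by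
    rw [← hcw, hsplit, List.append_assoc]
  rw [List.map_eq_append_iff] at hsplit'
  obtain ⟨r₁, r₂₃, hr, hr₁, hr₂₃⟩ := hsplit'
  rw [List.map_eq_append_iff] at hr₂₃
  obtain ⟨r₂, r₃, hr', hr₂, hr₃⟩ := hr₂₃
  subst hr'
  have hlr₁ : r₁.length = a := by
    rw [ha, ← hr₁, List.length_map]
  have hlr₂ : r₂.length = l₂.length := by
    rw [← hr₂, List.length_map]
  have hrange : List.range' 0 t = List.range' 0 a ++ (List.range' a l₂.length ++ List.range' (a + l₂.length) (l₃.length)) := by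
    have e1 : List.range' a l₂.length ++ List.range' (a + l₂.length) l₃.length
        = List.range' a (l₃.length + l₂.length) := by rw [List.range'_append_1, Nat.add_comm]
    have e2 : List.range' 0 a ++ List.range' (0 + a) (l₃.length + l₂.length)
        = List.range' 0 (l₃.length + l₂.length + a) := by rw [List.range'_append_1, Nat.add_comm]
    rw [Nat.zero_add] at e2
    rw [e1, e2]
    congr 1
    omega
  have hr₂eq : r₂ = List.range' a l₂.length := by
    rw [hrange] at hr
    have h1 := List.append_inj hr.symm (by rw [hlr₁, List.length_range'])
    have h2 := List.append_inj h1.2 (by rw [hlr₂, List.length_range'])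
    exact h2.1
  have hl₂prod : l₂.prod = PDSX.eatsM P ((δ.take (J b)).drop (J a)) := by
    rw [← hr₂, hr₂eq]
    rw [key l₂.length a (by omega)]
  set j₁ := J a with hj₁
  set j₂ := J b with hj₂
  have hj₁₂ : j₁ < j₂ := hJmono a b hab hble
  have hfa := hAfact a (by omega)
  have hfb := hAfact b hble
  have hcoleq : (st j₁, hd j₁, PDSX.eatsM P (δ.take j₁))
      = (st j₂, hd j₂, PDSX.eatsM P (δ.take j₂)) := by
    rw [hfa.2.2, hfb.2.2]
  rw [Prod.mk.injEq, Prod.mk.injEq] at hcoleq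
  have hsteq : st j₁ = st j₂ := hcoleq.1
  have hhdeq : hd j₁ = hd j₂ := hcoleq.2.1
  have heats : PDSX.eatsM P (δ.take j₁) = PDSX.eatsM P (δ.take j₂) := hcoleq.2.2
  have hj₂F : j₂ ≤ F := hfb.2.1
  have hj₂n : j₂ ≤ n := le_trans hj₂F hFn
  set β := (δ.take j₂).drop j₁ with hβ
  have hβlen : β.length = j₂ - j₁ := by
    rw [hβ, List.length_drop, List.length_take]
    omega
  refine ⟨δ.take j₁, β, δ.drop j₂, ?_, ⟨?_, ?_, ?_⟩, ?_, ?_, ?_⟩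
  · rw [PDSX.take_seg δ (le_of_lt hj₁₂)]
    exact (List.take_append_drop j₂ δ).symm
  · intro hcon
    rw [hcon] at hβlen
    simp at hβlen
    omega
  · have : δ.take j₁ ++ β = δ.take j₂ := PDSX.take_seg δ (le_of_lt hj₁₂)
    rw [this]
    exact PDSX.eatsM_inj heats
  · have hββ : PDSX.eatsM P (β ++ β) = PDSX.eatsM P β := by
      rw [PDSX.eatsM_append]
      rw [hl₂prod] at hidem
      exact hidem
    exact (PDSX.eatsM_inj hββ).symm
  · rw [List.length_take]
    have := hfa.2.1
    omega
  · omega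
  · intro i
    exact hpump j₁ j₂ hfa.1 hj₁₂ (by omega) hsteq hhdeq i
end

section
/- For every pushdown system P = (Q, Γ, A, Δ), every q ∈ Q, every α ∈ Γ*, and all stack contents γ, γ′ ∈ RegStr(Γ): if rγ ∼ rγ′ for every r ∈ eats_α(q), then qαγ ∼ qαγ′. -/
section Aux

variable {Q Γ A : Type}

theorem SC.push_nil' (σ : SC Γ) : SC.push ([] : List Γ) σ = σ := by
  cases σ <;> simp [SC.push, Stream'.nil_append_stream] <;> rfl

theorem SC.push_cons' (X : Γ) (δ : List Γ) (σ : SC Γ) :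
    SC.push (X :: δ) σ = SC.cons X (SC.push δ σ) := by
  cases σ <;> simp [SC.push, SC.cons, Stream'.cons_append_stream] <;> rfl

theorem SC.push_push' (γ₁ δ : List Γ) (σ : SC Γ) :
    SC.push γ₁ (SC.push δ σ) = SC.push (γ₁ ++ δ) σ := by
  cases σ <;> simp [SC.push, Stream'.append_append_stream] <;> rfl

theorem SC.cons_inj' {X X' : Γ} {σ σ' : SC Γ} (h : SC.cons X σ = SC.cons X' σ') :
    X = X' ∧ σ = σ' := by
  rcases σ with l | st <;> rcases σ' with l' | st'
  · have h' : (Sum.inl (X :: l) : List Γ ⊕ Stream' Γ) = Sum.inl (X' :: l') := h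
    obtain ⟨h1, h2⟩ := List.cons.injEq .. ▸ Sum.inl.inj h'
    exact ⟨h1, congrArg Sum.inl h2⟩
  · exact absurd (h : (Sum.inl _ : List Γ ⊕ Stream' Γ) = Sum.inr _) Sum.inl_ne_inr
  · exact absurd (h : (Sum.inr _ : List Γ ⊕ Stream' Γ) = Sum.inl _) Sum.inr_ne_inl
  · have h' : (Sum.inr (Stream'.cons X st) : List Γ ⊕ Stream' Γ) = Sum.inr (Stream'.cons X' st') := h
    obtain ⟨h1, h2⟩ := Stream'.cons_injective2 (Sum.inr.inj h')
    exact ⟨h1, congrArg Sum.inr h2⟩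

theorem bisim_symm (P : PDS Q Γ A) {s t : Q × SC Γ} (h : P.Bisim s t) : P.Bisim t s := by
  obtain ⟨R, hR, hst⟩ := h
  exact ⟨flip R, fun u v huv a => ⟨(hR v u huv a).2, (hR v u huv a).1⟩, hst⟩

theorem bisim_isBisim (P : PDS Q Γ A) : P.IsBisim P.Bisim := by
  rintro s t ⟨R, hR, hst⟩ a
  constructor
  · intro s' hs'
    obtain ⟨t', ht', hR'⟩ := (hR s t hst a).1 s' hs'
    exact ⟨t', ht', R, hR, hR'⟩
  · intro t' ht'
    obtain ⟨s', hs', hR'⟩ := (hR s t hst a).2 t' ht'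
    exact ⟨s', hs', R, hR, hR'⟩

theorem key_step (P : PDS Q Γ A) (q : Q) (α : List Γ) (γ γ' : SC Γ)
    (hbis : ∀ r ∈ P.eats α {q}, P.Bisim (r, γ) (r, γ'))
    (p : Q) (δ : List Γ) (hδ : δ ≠ []) (hreach : P.Reach (q, Sum.inl α) (p, Sum.inl δ))
    (a : A) (s' : Q × SC Γ) (hs : P.Step a (p, SC.push δ γ) s') :
    ∃ t', P.Step a (p, SC.push δ γ') t' ∧
      ((∃ p₂ δ₂, δ₂ ≠ [] ∧ P.Reach (q, Sum.inl α) (p₂, Sum.inl δ₂) ∧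
        s' = (p₂, SC.push δ₂ γ) ∧ t' = (p₂, SC.push δ₂ γ')) ∨ P.Bisim s' t') := by
  obtain ⟨p₁, X, q₁, γ₁, σ, hmem, hseq, hs'eq⟩ := hs
  obtain ⟨X', δ₀, rfl⟩ := List.exists_cons_of_ne_nil hδ
  rw [SC.push_cons'] at hseq
  have hp : p₁ = p := congrArg Prod.fst hseq.symm
  have hcons : SC.cons X σ = SC.cons X' (SC.push δ₀ γ) := congrArg Prod.snd hseq.symm
  obtain ⟨hX, hσ⟩ := SC.cons_inj' hcons
  rw [hp] at hmem
  subst hX hσ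
  -- the corresponding step on the other side
  have hstep' : P.Step a (p, SC.push (X :: δ₀) γ') (q₁, SC.push (γ₁ ++ δ₀) γ') := by
    refine ⟨p, X, q₁, γ₁, SC.push δ₀ γ', hmem, ?_, ?_⟩
    · rw [SC.push_cons']
    · rw [SC.push_push']
  have hs'form : s' = (q₁, SC.push (γ₁ ++ δ₀) γ) := by
    rw [hs'eq, SC.push_push']
  -- reachability extension on finite stacks
  have hreach' : P.Reach (q, Sum.inl α) (q₁, Sum.inl (γ₁ ++ δ₀)) := by
    refine hreach.tail ⟨a, p, X, q₁, γ₁, Sum.inl δ₀, hmem, rfl, rfl⟩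
  refine ⟨(q₁, SC.push (γ₁ ++ δ₀) γ'), hstep', ?_⟩
  by_cases hnil : γ₁ ++ δ₀ = []
  · right
    rw [hs'form, hnil, SC.push_nil', SC.push_nil']
    exact hbis q₁ ⟨q, rfl, by rw [← hnil]; exact hreach'⟩
  · exact Or.inl ⟨q₁, γ₁ ++ δ₀, hnil, hreach', hs'form, rfl⟩

end Aux

/-- If `rγ ∼ rγ'` for every `r ∈ eats_α(q)`, then `qαγ ∼ qαγ'`. -/
theorem stmt_9 (Q Γ A : Type) (P : PDS Q Γ A) (q : Q) (α : List Γ) (γ γ' : SC Γ)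
    (hbis : ∀ r ∈ P.eats α {q}, P.Bisim (r, γ) (r, γ')) :
    P.Bisim (q, SC.push α γ) (q, SC.push α γ') := by
  rcases eq_or_ne α [] with rfl | hα
  · rw [SC.push_nil', SC.push_nil']
    exact hbis q ⟨q, rfl, Relation.ReflTransGen.refl⟩
  set R : (Q × SC Γ) → (Q × SC Γ) → Prop := fun s t =>
    (∃ p δ, δ ≠ [] ∧ P.Reach (q, Sum.inl α) (p, Sum.inl δ) ∧
      s = (p, SC.push δ γ) ∧ t = (p, SC.push δ γ')) ∨ P.Bisim s t with hRdef
  have hbis' : ∀ r ∈ P.eats α {q}, P.Bisim (r, γ') (r, γ) :=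
    fun r hr => bisim_symm P (hbis r hr)
  refine ⟨R, ?_, Or.inl ⟨q, α, hα, Relation.ReflTransGen.refl, rfl, rfl⟩⟩
  rintro s t (⟨p, δ, hδ, hreach, rfl, rfl⟩ | hb) a
  · constructor
    · intro s' hs'
      obtain ⟨t', ht', hRel⟩ := key_step P q α γ γ' hbis p δ hδ hreach a s' hs'
      exact ⟨t', ht', hRel⟩
    · intro t' ht'
      obtain ⟨s', hs', hRel⟩ := key_step P q α γ' γ hbis' p δ hδ hreach a t' ht'
      refine ⟨s', hs', ?_⟩
      rcases hRel with ⟨p₂, δ₂, h1, h2, h3, h4⟩ | hb'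
      · exact Or.inl ⟨p₂, δ₂, h1, h2, h4, h3⟩
      · exact Or.inr (bisim_symm P hb')
  · constructor
    · intro s' hs'
      obtain ⟨t', ht', hb'⟩ := (bisim_isBisim P s t hb a).1 s' hs'
      exact ⟨t', ht', Or.inr hb'⟩
    · intro t' ht'
      obtain ⟨s', hs', hb'⟩ := (bisim_isBisim P s t hb a).2 t' ht'
      exact ⟨s', hs', Or.inr hb'⟩
end
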